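/- arXiv:2112.15081 — 2 statements merged into one kernel-verified Lean document; each statement's English description precedes it below -/
import Mathlib

section
/- For any finite set S of positive integers, the number of S-inversion sequences avoiding the pattern 2301 equals the number of S-inversion sequences avoiding the pattern 2310; i.e. |I_S(2301)| = |I_S(2310)|. -/
/-- Two integer sequences of the same length are order isomorphic:
entries compare in the same way at every pair of positions. -/
def OrderIsoSeq (a b : List ℕ) : Prop :=
  a.length = b.length ∧
  ∀ i j : ℕ, i < a.length → j < a.length →
    ((a[i]! < a[j]!) ↔ (b[i]! < b[j]!)) ∧ ((a[i]! = a[j]!) ↔ (b[i]! = b[j]!))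

/-- A sequence `e` contains the pattern `p` if some (not necessarily consecutive)
subsequence of `e` is order isomorphic to `p`. -/
def ContainsPat (e p : List ℕ) : Prop :=
  ∃ s : List ℕ, s.Sublist e ∧ OrderIsoSeq s p

/-- A sequence `e` avoids the pattern `p` if it does not contain it. -/
def AvoidsPat (e p : List ℕ) : Prop := ¬ ContainsPat e p

/-- Inversion sequences of length `n`: `e = e_1 ⋯ e_n` with `0 ≤ e_i < i`
(position `i` is stored at index `i - 1`). -/
def InvSeq (n : ℕ) : Set (List ℕ) :=
  {e | e.length = n ∧ ∀ i : ℕ, i < n → e[i]! < i + 1}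

/-- `S`-inversion sequences for a finite set `S = {s_1 < ⋯ < s_n}` of positive
integers: sequences `e = e_1 ⋯ e_n` with `0 ≤ e_i < s_i`. -/
def SInvSeq (S : Finset ℕ) : Set (List ℕ) :=
  {e | e.length = S.card ∧ ∀ i : ℕ, i < S.card → e[i]! < (S.sort (· ≤ ·))[i]!}

/-- `I_n(p)`: inversion sequences of length `n` avoiding the pattern `p`. -/
def InvAvoid (n : ℕ) (p : List ℕ) : Set (List ℕ) :=
  {e ∈ InvSeq n | AvoidsPat e p}

/-- `I_S(p)`: `S`-inversion sequences avoiding the pattern `p`. -/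
def SInvAvoid (S : Finset ℕ) (p : List ℕ) : Set (List ℕ) :=
  {e ∈ SInvSeq S | AvoidsPat e p}

set_option linter.unusedVariables false
set_option linter.unusedSectionVars false

open Classical in
noncomputable def Mf (e : List ℕ) (k : ℕ) : ℕ :=
  ((Finset.range k).filter (fun i => ∃ j, i < j ∧ j < k ∧ e[i]! < e[j]!)).sup (fun i => e[i]!)

lemma lt_Mf_iff {e : List ℕ} {a k : ℕ} :
    a < Mf e k ↔ ∃ i j, i < j ∧ j < k ∧ e[i]! < e[j]! ∧ a < e[i]! := by
  classical
  rw [Mf, Finset.lt_sup_iff]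
  constructor
  · rintro ⟨i, hi, h⟩
    simp only [Finset.mem_filter, Finset.mem_range] at hi
    obtain ⟨-, j, hij, hjk, hlt⟩ := hi
    exact ⟨i, j, hij, hjk, hlt, h⟩
  · rintro ⟨i, j, hij, hjk, hlt, h⟩
    refine ⟨i, ?_, h⟩
    simp only [Finset.mem_filter, Finset.mem_range]
    exact ⟨lt_trans hij hjk, j, hij, hjk, hlt⟩

lemma Mf_le_iff {e : List ℕ} {k c : ℕ} :
    Mf e k ≤ c ↔ ∀ i j, i < j → j < k → e[i]! < e[j]! → e[i]! ≤ c := by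
  classical
  rw [Mf, Finset.sup_le_iff]
  constructor
  · intro h i j hij hjk hlt
    apply h i
    simp only [Finset.mem_filter, Finset.mem_range]
    exact ⟨lt_trans hij hjk, j, hij, hjk, hlt⟩
  · intro h i hi
    simp only [Finset.mem_filter, Finset.mem_range] at hi
    obtain ⟨-, j, hij, hjk, hlt⟩ := hi
    exact h i j hij hjk hlt

lemma le_Mf {e : List ℕ} {i j k : ℕ} (hij : i < j) (hjk : j < k) (hlt : e[i]! < e[j]!) :
    e[i]! ≤ Mf e k := by
  by_contra h
  exact h ((Mf_le_iff.mp (le_refl _)) i j hij hjk hlt)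

lemma Mf_mono (e : List ℕ) {k k' : ℕ} (h : k ≤ k') : Mf e k ≤ Mf e k' := by
  rw [Mf_le_iff]
  intro i j hij hjk hlt
  exact le_Mf hij (lt_of_lt_of_le hjk h) hlt

lemma Mf_congr {e e' : List ℕ} {k : ℕ} (h : ∀ i, i < k → e'[i]! = e[i]!) :
    Mf e' k = Mf e k := by
  classical
  unfold Mf
  apply Finset.sup_congr
  · ext i
    simp only [Finset.mem_filter, Finset.mem_range, and_congr_right_iff]
    intro hik
    constructor <;> rintro ⟨j, hij, hjk, hlt⟩ <;> refine ⟨j, hij, hjk, ?_⟩ <;>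
      rw [h i (lt_trans hij hjk), h j hjk] at * <;> exact hlt
  · intro i hi
    simp only [Finset.mem_filter, Finset.mem_range] at hi
    exact h i hi.1

/-- decompose a list of length 4 -/
lemma len4 {s : List ℕ} (h : s.length = 4) : ∃ a b c d, s = [a, b, c, d] := by
  match s, h with
  | [a, b, c, d], _ => exact ⟨a, b, c, d, rfl⟩

lemma quad_sublist {e : List ℕ} {i j k l : ℕ} (h1 : i < j) (h2 : j < k) (h3 : k < l)
    (h4 : l < e.length) : [e[i]!, e[j]!, e[k]!, e[l]!].Sublist e := by
  have hi : i < e.length := by omega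
  have hj : j < e.length := by omega
  have hk : k < e.length := by omega
  have hs : (List.map (fun x : Fin e.length => e[x]) [⟨i, hi⟩, ⟨j, hj⟩, ⟨k, hk⟩, ⟨l, h4⟩]).Sublist e := by
    apply List.map_getElem_sublist
    simp [List.pairwise_cons]
    omega
  simpa [getElem!_pos e i hi, getElem!_pos e j hj, getElem!_pos e k hk, getElem!_pos e l h4]
    using hs

lemma orderIso4 {a b c d : ℕ} {p : List ℕ} (hp : p.length = 4)
    (h01 : (a < b ↔ p[0]! < p[1]!) ∧ (a = b ↔ p[0]! = p[1]!))
    (h02 : (a < c ↔ p[0]! < p[2]!) ∧ (a = c ↔ p[0]! = p[2]!))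
    (h03 : (a < d ↔ p[0]! < p[3]!) ∧ (a = d ↔ p[0]! = p[3]!))
    (h12 : (b < c ↔ p[1]! < p[2]!) ∧ (b = c ↔ p[1]! = p[2]!))
    (h13 : (b < d ↔ p[1]! < p[3]!) ∧ (b = d ↔ p[1]! = p[3]!))
    (h23 : (c < d ↔ p[2]! < p[3]!) ∧ (c = d ↔ p[2]! = p[3]!)) :
    OrderIsoSeq [a, b, c, d] p := by
  constructor
  · simpa using hp.symm
  intro i j hi hj
  simp only [List.length_cons, List.length_nil] at hi hj
  have sym : ∀ x y : ℕ, ((x < y ↔ p[0]! < p[1]!) ∧ (x = y ↔ p[0]! = p[1]!)) → True := fun _ _ _ => trivial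
  interval_cases i <;> interval_cases j <;>
    simp only [List.getElem!_cons_zero, List.getElem!_cons_succ] <;>
    first
      | exact ⟨Iff.rfl, Iff.rfl⟩
      | exact h01 | exact h02 | exact h03 | exact h12 | exact h13 | exact h23
      | exact ⟨⟨fun h => by omega, fun h => by omega⟩, ⟨fun h => by omega, fun h => by omega⟩⟩
      | (constructor <;> constructor <;> intro h <;> omega)

/-- generic 4-pattern with distinct entries: extraction of indices -/
lemma contains4_exists {e p : List ℕ} (hp : p.length = 4) (h : ContainsPat e p) :
    ∃ i j k l : ℕ, i < j ∧ j < k ∧ k < l ∧ l < e.length ∧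
      OrderIsoSeq [e[i]!, e[j]!, e[k]!, e[l]!] p := by
  obtain ⟨s, hs, hiso⟩ := h
  have hlen : s.length = 4 := hiso.1.trans hp
  obtain ⟨is, his, hpw⟩ := List.sublist_eq_map_getElem hs
  have hislen : is.length = 4 := by
    have := congrArg List.length his
    simpa [hlen] using this.symm
  obtain ⟨i, j, k, l, rfl⟩ : ∃ a b c d : Fin e.length, is = [a, b, c, d] := by
    match is, hislen with
    | [a, b, c, d], _ => exact ⟨a, b, c, d, rfl⟩
  simp only [List.pairwise_cons, List.mem_cons, List.mem_singleton, List.not_mem_nil] at hpw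
  have hij : (i : ℕ) < j := by
    have := hpw.1 j (by simp); exact_mod_cast this
  have hjk : (j : ℕ) < k := by have := hpw.2.1 k (by simp); exact_mod_cast this
  have hkl : (k : ℕ) < l := by have := hpw.2.2.1 l (by simp); exact_mod_cast this
  refine ⟨i, j, k, l, hij, hjk, hkl, l.2, ?_⟩
  have hs' : s = [e[(i:ℕ)]!, e[(j:ℕ)]!, e[(k:ℕ)]!, e[(l:ℕ)]!] := by
    rw [his]
    simp [getElem!_pos e (i:ℕ) i.2, getElem!_pos e (j:ℕ) j.2, getElem!_pos e (k:ℕ) k.2,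
      getElem!_pos e (l:ℕ) l.2]
  rw [← hs']
  exact hiso

lemma oiso_get {s p : List ℕ} (h : OrderIsoSeq s p) (i j : ℕ) (hi : i < s.length)
    (hj : j < s.length) :
    ((s[i]! < s[j]!) ↔ (p[i]! < p[j]!)) ∧ ((s[i]! = s[j]!) ↔ (p[i]! = p[j]!)) :=
  h.2 i j hi hj

lemma contains2301_iff {e : List ℕ} :
    ContainsPat e [2, 3, 0, 1] ↔ ∃ i j k l : ℕ, i < j ∧ j < k ∧ k < l ∧ l < e.length ∧
      e[i]! < e[j]! ∧ e[k]! < e[l]! ∧ e[l]! < e[i]! := by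
  constructor
  · intro h
    obtain ⟨i, j, k, l, hij, hjk, hkl, hl, hiso⟩ := contains4_exists (by simp) h
    refine ⟨i, j, k, l, hij, hjk, hkl, hl, ?_, ?_, ?_⟩
    · have := (oiso_get hiso 0 1 (by simp) (by simp)).1
      simpa using this
    · have := (oiso_get hiso 2 3 (by simp) (by simp)).1
      simpa using this
    · have := (oiso_get hiso 3 0 (by simp) (by simp)).1
      simpa using this
  · rintro ⟨i, j, k, l, hij, hjk, hkl, hl, h1, h2, h3⟩
    refine ⟨[e[i]!, e[j]!, e[k]!, e[l]!], quad_sublist hij hjk hkl hl, ?_⟩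
    apply orderIso4 (by simp) <;> simp <;> simp only [List.getElem!_eq_getElem?_getD, Nat.default_eq_zero] at * <;> omega

lemma contains2310_iff {e : List ℕ} :
    ContainsPat e [2, 3, 1, 0] ↔ ∃ i j k l : ℕ, i < j ∧ j < k ∧ k < l ∧ l < e.length ∧
      e[i]! < e[j]! ∧ e[l]! < e[k]! ∧ e[k]! < e[i]! := by
  constructor
  · intro h
    obtain ⟨i, j, k, l, hij, hjk, hkl, hl, hiso⟩ := contains4_exists (by simp) h
    refine ⟨i, j, k, l, hij, hjk, hkl, hl, ?_, ?_, ?_⟩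
    · have := (oiso_get hiso 0 1 (by simp) (by simp)).1
      simpa using this
    · have := (oiso_get hiso 3 2 (by simp) (by simp)).1
      simpa using this
    · have := (oiso_get hiso 2 0 (by simp) (by simp)).1
      simpa using this
  · rintro ⟨i, j, k, l, hij, hjk, hkl, hl, h1, h2, h3⟩
    refine ⟨[e[i]!, e[j]!, e[k]!, e[l]!], quad_sublist hij hjk hkl hl, ?_⟩
    apply orderIso4 (by simp) <;> simp <;> simp only [List.getElem!_eq_getElem?_getD, Nat.default_eq_zero] at * <;> omega

lemma contains2301_iff_Mf {e : List ℕ} :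
    ContainsPat e [2, 3, 0, 1] ↔
      ∃ k l : ℕ, k < l ∧ l < e.length ∧ e[k]! < e[l]! ∧ e[l]! < Mf e k := by
  rw [contains2301_iff]
  constructor
  · rintro ⟨i, j, k, l, hij, hjk, hkl, hl, h1, h2, h3⟩
    exact ⟨k, l, hkl, hl, h2, lt_of_lt_of_le h3 (le_Mf hij hjk h1)⟩
  · rintro ⟨k, l, hkl, hl, h2, h3⟩
    obtain ⟨i, j, hij, hjk, h1, h4⟩ := lt_Mf_iff.mp h3
    exact ⟨i, j, k, l, hij, hjk, hkl, hl, h1, h2, h4⟩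

lemma contains2310_iff_Mf {e : List ℕ} :
    ContainsPat e [2, 3, 1, 0] ↔
      ∃ k l : ℕ, k < l ∧ l < e.length ∧ e[l]! < e[k]! ∧ e[k]! < Mf e k := by
  rw [contains2310_iff]
  constructor
  · rintro ⟨i, j, k, l, hij, hjk, hkl, hl, h1, h2, h3⟩
    exact ⟨k, l, hkl, hl, h2, lt_of_lt_of_le h3 (le_Mf hij hjk h1)⟩
  · rintro ⟨k, l, hkl, hl, h2, h3⟩
    obtain ⟨i, j, hij, hjk, h1, h4⟩ := lt_Mf_iff.mp h3
    exact ⟨i, j, k, l, hij, hjk, hkl, hl, h1, h2, h4⟩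

/-- Stability of Mf under changes at active positions. -/
lemma Mf_stable {e e' : List ℕ} {n : ℕ}
    (H : ∀ i, i < n → e'[i]! = e[i]! ∨ (e[i]! < Mf e i ∧ e'[i]! < Mf e i)) :
    ∀ k, k ≤ n → Mf e' k = Mf e k := by
  intro k
  induction k using Nat.strong_induction_on with
  | _ k IH =>
    intro hk
    apply le_antisymm
    · rw [Mf_le_iff]
      intro i j hij hjk hlt
      rcases H i (by omega) with hi | ⟨hia, hia'⟩
      · rcases H j (by omega) with hj | ⟨hja, hja'⟩
        · rw [hi]
          exact le_Mf hij hjk (by rw [← hi, ← hj]; exact hlt)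
        · have h1 : Mf e j ≤ Mf e k := Mf_mono e (le_of_lt hjk)
          omega
      · have h2 : Mf e i ≤ Mf e k := Mf_mono e (by omega)
        omega
    · rw [Mf_le_iff]
      intro i j hij hjk hlt
      rcases H i (by omega) with hi | ⟨hia, hia'⟩
      · rcases H j (by omega) with hj | ⟨hja, hja'⟩
        · rw [← hi]
          exact le_Mf hij hjk (by rw [hi, hj]; exact hlt)
        · have hj' : Mf e' j = Mf e j := IH j (by omega) (by omega)
          have h1 : Mf e' j ≤ Mf e' k := Mf_mono e' (le_of_lt hjk)
          omega
      · have hi' : Mf e' i = Mf e i := IH i (by omega) (by omega)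
        have h2 : Mf e' i ≤ Mf e' k := Mf_mono e' (by omega)
        omega

/-- gap-removal map -/
def gdn (v₁ d x : ℕ) : ℕ := if x ≤ v₁ then x else x - d
/-- gap-insertion map -/
def gup (v₁ d x : ℕ) : ℕ := if x ≤ v₁ then x else x + d

def psi : List ℕ → List ℕ → List ℕ
  | m₁ :: ms, v₁ :: vs =>
      (m₁ - 1 - v₁) ::
        (psi (ms.map (· - (m₁ - 1 - v₁))) (vs.map (gdn v₁ (m₁ - 1 - v₁)))).map
          (· + (m₁ - 1 - v₁))
  | _, _ => []
  termination_by m v => v.length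
  decreasing_by simp

def psiInv : List ℕ → List ℕ → List ℕ
  | m₁ :: ms, w₁ :: ws =>
      (m₁ - 1 - w₁) ::
        (psiInv (ms.map (· - w₁)) (ws.map (· - w₁))).map (gup (m₁ - 1 - w₁) w₁)
  | _, _ => []
  termination_by m w => w.length
  decreasing_by simp

def IncB : List ℕ → List ℕ → Prop
  | m₁ :: ms, w₁ :: ws => w₁ < m₁ ∧ (∀ x ∈ ws, w₁ ≤ x) ∧ IncB ms ws
  | [], [] => True
  | _, _ => False

def AvB : List ℕ → List ℕ → Prop
  | m₁ :: ms, v₁ :: vs => v₁ < m₁ ∧ (∀ x ∈ vs, x ≤ v₁ ∨ m₁ ≤ x) ∧ AvB ms vs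
  | [], [] => True
  | _, _ => False

lemma incB_length : ∀ {m w : List ℕ}, IncB m w → w.length = m.length
  | [], [], _ => rfl
  | m₁ :: ms, w₁ :: ws, h => by
      simp only [List.length_cons]
      exact congrArg (· + 1) (incB_length h.2.2)
  | [], _ :: _, h => absurd h (by simp [IncB])
  | _ :: _, [], h => absurd h (by simp [IncB])

lemma avB_length : ∀ {m v : List ℕ}, AvB m v → v.length = m.length
  | [], [], _ => rfl
  | m₁ :: ms, v₁ :: vs, h => by
      simp only [List.length_cons]
      exact congrArg (· + 1) (avB_length h.2.2)
  | [], _ :: _, h => absurd h (by simp [AvB])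
  | _ :: _, [], h => absurd h (by simp [AvB])

lemma sorted_head {m₁ : ℕ} {ms : List ℕ} (h : (m₁ :: ms).Pairwise (· ≤ ·)) :
    (∀ b ∈ ms, m₁ ≤ b) ∧ ms.Pairwise (· ≤ ·) := by
  rw [List.pairwise_cons] at h; exact h

lemma sorted_map_sub {ms : List ℕ} (d : ℕ) (h : ms.Pairwise (· ≤ ·)) :
    (ms.map (· - d)).Pairwise (· ≤ ·) := by
  rw [List.pairwise_map]
  exact h.imp (fun hab => by omega)

/-- H1: shift an IncB back up -/
lemma incB_shift : ∀ (ms w : List ℕ) (d : ℕ), (∀ b ∈ ms, d < b) →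
    IncB (ms.map (· - d)) w → IncB ms (w.map (· + d))
  | [], w, d, _, h => by
      have := incB_length h; simp at this
      subst this; simp [IncB]
  | m :: ms, w, d, hb, h => by
      have hlen := incB_length h
      match w with
      | [] => simp at hlen
      | w₁ :: ws =>
        obtain ⟨h1, h2, h3⟩ := h
        have hdm : d < m := hb m (by simp)
        have h1' : w₁ < m - d := h1
        refine ⟨show w₁ + d < m by omega, ?_, ?_⟩
        · intro x hx
          simp only [List.mem_map] at hx
          obtain ⟨y, hy, rfl⟩ := hx
          have := h2 y hy
          show w₁ + d ≤ y + d
          omega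
        · exact incB_shift ms ws d (fun b hbm => hb b (by simp [hbm])) h3

/-- H4: shift an IncB down -/
lemma incB_unshift : ∀ (ms ws : List ℕ) (w₁ : ℕ), (∀ x ∈ ws, w₁ ≤ x) →
    IncB ms ws → IncB (ms.map (· - w₁)) (ws.map (· - w₁))
  | [], [], _, _, _ => by simp [IncB]
  | [], _ :: _, _, _, h => absurd h (by simp [IncB])
  | _ :: _, [], _, _, h => absurd h (by simp [IncB])
  | m :: ms, x :: xs, w₁, hge, h => by
      obtain ⟨h1, h2, h3⟩ := h
      have hx : w₁ ≤ x := hge x (by simp)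
      have h1' : x < m := h1
      refine ⟨show x - w₁ < m - w₁ by omega, ?_, ?_⟩
      · intro z hz
        simp only [List.mem_map] at hz
        obtain ⟨y, hy, rfl⟩ := hz
        have := h2 y hy
        show x - w₁ ≤ y - w₁
        omega
      · exact incB_unshift ms xs w₁ (fun b hbm => hge b (by simp [hbm])) h3

/-- H2: gap-removal preserves AvB -/
lemma avB_gap : ∀ (ms vs : List ℕ) (v₁ m₁ : ℕ), v₁ < m₁ →
    (∀ x ∈ vs, x ≤ v₁ ∨ m₁ ≤ x) → (∀ b ∈ ms, m₁ ≤ b) → AvB ms vs →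
    AvB (ms.map (· - (m₁ - 1 - v₁))) (vs.map (gdn v₁ (m₁ - 1 - v₁)))
  | [], [], _, _, _, _, _, _ => by simp [AvB]
  | [], _ :: _, _, _, _, _, _, h => absurd h (by simp [AvB])
  | _ :: _, [], _, _, _, _, _, h => absurd h (by simp [AvB])
  | m :: ms, x :: xs, v₁, m₁, hv, hall, hms, h => by
      obtain ⟨h1, h2, h3⟩ := h
      have hm : m₁ ≤ m := hms m (by simp)
      have hx : x ≤ v₁ ∨ m₁ ≤ x := hall x (by simp)
      set d := m₁ - 1 - v₁ with hd
      refine ⟨?_, ?_, ?_⟩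
      · show gdn v₁ d x < m - d
        unfold gdn; split <;> omega
      · intro z hz
        simp only [List.mem_map] at hz
        obtain ⟨y, hy, rfl⟩ := hz
        have hy1 : y ≤ x ∨ m ≤ y := h2 y hy
        have hy2 : y ≤ v₁ ∨ m₁ ≤ y := hall y (by simp [hy])
        show gdn v₁ d y ≤ gdn v₁ d x ∨ m - d ≤ gdn v₁ d y
        unfold gdn; split <;> split <;> omega
      · exact avB_gap ms xs v₁ m₁ hv (fun b hb => hall b (by simp [hb]))
          (fun b hb => hms b (by simp [hb])) h3

/-- H3: gap-insertion preserves AvB -/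
lemma avB_ungap : ∀ (ms u : List ℕ) (w₁ m₁ : ℕ), w₁ < m₁ →
    (∀ b ∈ ms, m₁ ≤ b) → AvB (ms.map (· - w₁)) u →
    AvB ms (u.map (gup (m₁ - 1 - w₁) w₁))
  | [], u, _, _, _, _, h => by
      have := avB_length h; simp at this
      subst this; simp [AvB]
  | m :: ms, u, w₁, m₁, hw, hms, h => by
      have hlen := avB_length h
      match u with
      | [] => simp at hlen
      | x :: xs =>
        obtain ⟨h1, h2, h3⟩ := h
        have hm : m₁ ≤ m := hms m (by simp)
        have h1' : x < m - w₁ := h1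
        set v₁ := m₁ - 1 - w₁ with hv
        refine ⟨?_, ?_, ?_⟩
        · show gup v₁ w₁ x < m
          unfold gup; split <;> omega
        · intro z hz
          simp only [List.mem_map] at hz
          obtain ⟨y, hy, rfl⟩ := hz
          have hy1 : y ≤ x ∨ m - w₁ ≤ y := h2 y hy
          show gup v₁ w₁ y ≤ gup v₁ w₁ x ∨ m ≤ gup v₁ w₁ y
          unfold gup; split <;> split <;> omega
        · exact avB_ungap ms xs w₁ m₁ hw (fun b hb => hms b (by simp [hb])) h3

lemma psi_nil (m : List ℕ) : psi m [] = [] := by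
  cases m <;> simp [psi]

lemma psiInv_nil (m : List ℕ) : psiInv m [] = [] := by
  cases m <;> simp [psiInv]

lemma psi_cons (m₁ v₁ : ℕ) (ms vs : List ℕ) :
    psi (m₁ :: ms) (v₁ :: vs) = (m₁ - 1 - v₁) ::
      (psi (ms.map (· - (m₁ - 1 - v₁))) (vs.map (gdn v₁ (m₁ - 1 - v₁)))).map
        (· + (m₁ - 1 - v₁)) := by
  rw [psi]

lemma psiInv_cons (m₁ w₁ : ℕ) (ms ws : List ℕ) :
    psiInv (m₁ :: ms) (w₁ :: ws) = (m₁ - 1 - w₁) ::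
      (psiInv (ms.map (· - w₁)) (ws.map (· - w₁))).map (gup (m₁ - 1 - w₁) w₁) := by
  rw [psiInv]

/-- C1 + C3 combined -/
lemma psi_spec : ∀ (n : ℕ) (v m : List ℕ), v.length ≤ n → m.Pairwise (· ≤ ·) →
    AvB m v → IncB m (psi m v) ∧ psiInv m (psi m v) = v := by
  intro n
  induction n with
  | zero =>
    intro v m hn hm ha
    rw [Nat.le_zero, List.length_eq_zero_iff] at hn
    subst hn
    have hm0 : m = [] := by have := avB_length ha; simpa using this.symm
    subst hm0
    simp [psi_nil, psiInv_nil, IncB]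
  | succ n IH =>
    intro v m hn hm ha
    match v, m with
    | [], m =>
      have hm0 : m = [] := by have := avB_length ha; simpa using this.symm
      subst hm0
      simp [psi_nil, psiInv_nil, IncB]
    | v₁ :: vs, [] => exact absurd ha (by simp [AvB])
    | v₁ :: vs, m₁ :: ms =>
      obtain ⟨h1, h2, h3⟩ := ha
      obtain ⟨hms1, hms2⟩ := sorted_head hm
      set d := m₁ - 1 - v₁ with hd
      have hsort' : (ms.map (· - d)).Pairwise (· ≤ ·) := sorted_map_sub d hms2
      have hgap : AvB (ms.map (· - d)) (vs.map (gdn v₁ d)) :=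
        avB_gap ms vs v₁ m₁ h1 h2 hms1 h3
      have hlen : (vs.map (gdn v₁ d)).length ≤ n := by
        simp only [List.length_map]
        simpa using Nat.lt_succ_iff.mp (lt_of_lt_of_le (by simp) hn)
      obtain ⟨hInc, hRT⟩ := IH (vs.map (gdn v₁ d)) (ms.map (· - d)) hlen hsort' hgap
      rw [psi_cons]
      constructor
      · -- IncB (m₁ :: ms) (d :: (psi ...).map (· + d))
        refine ⟨by omega, ?_, ?_⟩
        · intro x hx
          simp only [List.mem_map] at hx
          obtain ⟨y, hy, rfl⟩ := hx
          show d ≤ y + d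
          omega
        · exact incB_shift ms _ d (fun b hb => lt_of_lt_of_le (by omega) (hms1 b hb)) hInc
      · -- roundtrip
        rw [psiInv_cons]
        have e1 : m₁ - 1 - d = v₁ := by omega
        have e2 : ((psi (ms.map (· - d)) (vs.map (gdn v₁ d))).map (· + d)).map (· - d)
            = psi (ms.map (· - d)) (vs.map (gdn v₁ d)) := by
          rw [List.map_map]
          have : ((· - d) ∘ (· + d)) = fun x : ℕ => x := by
            funext x; simp
          rw [this]
          simp
        rw [e1, e2, hRT, List.map_map]
        congr 1
        apply List.map_congr_left ?_ |>.trans (List.map_id vs)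
        intro x hx
        have hx2 := h2 x hx
        show gup v₁ d (gdn v₁ d x) = x
        unfold gup gdn
        split <;> (try split) <;> omega

/-- C2 + C4 combined -/
lemma psiInv_spec : ∀ (n : ℕ) (w m : List ℕ), w.length ≤ n → m.Pairwise (· ≤ ·) →
    IncB m w → AvB m (psiInv m w) ∧ psi m (psiInv m w) = w := by
  intro n
  induction n with
  | zero =>
    intro w m hn hm hi
    rw [Nat.le_zero, List.length_eq_zero_iff] at hn
    subst hn
    have hm0 : m = [] := by have := incB_length hi; simpa using this.symm
    subst hm0
    simp [psi_nil, psiInv_nil, AvB]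
  | succ n IH =>
    intro w m hn hm hi
    match w, m with
    | [], m =>
      have hm0 : m = [] := by have := incB_length hi; simpa using this.symm
      subst hm0
      simp [psi_nil, psiInv_nil, AvB]
    | w₁ :: ws, [] => exact absurd hi (by simp [IncB])
    | w₁ :: ws, m₁ :: ms =>
      obtain ⟨h1, h2, h3⟩ := hi
      obtain ⟨hms1, hms2⟩ := sorted_head hm
      set v₁ := m₁ - 1 - w₁ with hv
      have hsort' : (ms.map (· - w₁)).Pairwise (· ≤ ·) := sorted_map_sub w₁ hms2
      have hshift : IncB (ms.map (· - w₁)) (ws.map (· - w₁)) := incB_unshift ms ws w₁ h2 h3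
      have hlen : (ws.map (· - w₁)).length ≤ n := by
        simp only [List.length_map]
        simpa using Nat.lt_succ_iff.mp (lt_of_lt_of_le (by simp) hn)
      obtain ⟨hAv, hRT⟩ := IH (ws.map (· - w₁)) (ms.map (· - w₁)) hlen hsort' hshift
      rw [psiInv_cons]
      constructor
      · -- AvB (m₁ :: ms) (v₁ :: u.map (gup v₁ w₁))
        refine ⟨by omega, ?_, ?_⟩
        · intro x hx
          simp only [List.mem_map] at hx
          obtain ⟨y, hy, rfl⟩ := hx
          show gup v₁ w₁ y ≤ v₁ ∨ m₁ ≤ gup v₁ w₁ y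
          unfold gup; split <;> omega
        · exact avB_ungap ms _ w₁ m₁ h1 hms1 hAv
      · -- roundtrip
        rw [psi_cons]
        have e1 : m₁ - 1 - v₁ = w₁ := by omega
        have e2 : ((psiInv (ms.map (· - w₁)) (ws.map (· - w₁))).map (gup v₁ w₁)).map
            (gdn v₁ w₁) = psiInv (ms.map (· - w₁)) (ws.map (· - w₁)) := by
          rw [List.map_map]
          apply List.map_congr_left ?_ |>.trans (List.map_id _)
          intro x _
          show gdn v₁ w₁ (gup v₁ w₁ x) = x
          unfold gup gdn
          split <;> (try split) <;> omega
        rw [e1, e2, hRT, List.map_map]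
        congr 1
        apply List.map_congr_left ?_ |>.trans (List.map_id ws)
        intro x hx
        have := h2 x hx
        show x - w₁ + w₁ = x
        omega

lemma getElem!_mem {l : List ℕ} {r : ℕ} (h : r < l.length) : l[r]! ∈ l := by
  rw [getElem!_pos l r h]
  exact List.getElem_mem h

lemma mem_getElem! {l : List ℕ} {x : ℕ} (h : x ∈ l) : ∃ r, r < l.length ∧ l[r]! = x := by
  obtain ⟨r, hr, rfl⟩ := List.mem_iff_getElem.mp h
  exact ⟨r, hr, getElem!_pos l r hr⟩

lemma incB_iff : ∀ (m w : List ℕ), IncB m w ↔ w.length = m.length ∧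
    (∀ r, r < w.length → w[r]! < m[r]!) ∧
    (∀ r s, r < s → s < w.length → w[r]! ≤ w[s]!)
  | [], [] => by simp [IncB]
  | [], w₁ :: ws => by simp [IncB]
  | m₁ :: ms, [] => by simp [IncB]
  | m₁ :: ms, w₁ :: ws => by
    rw [show IncB (m₁ :: ms) (w₁ :: ws) =
      (w₁ < m₁ ∧ (∀ x ∈ ws, w₁ ≤ x) ∧ IncB ms ws) from rfl, incB_iff ms ws]
    constructor
    · rintro ⟨h1, h2, hl, hb, hp⟩
      refine ⟨by simp [hl], ?_, ?_⟩
      · intro r hr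
        match r with
        | 0 => simpa using h1
        | r + 1 =>
          simp only [List.getElem!_cons_succ]
          exact hb r (by simpa using hr)
      · intro r s hrs hs
        match r, s with
        | 0, s + 1 =>
          simp only [List.getElem!_cons_zero, List.getElem!_cons_succ]
          exact h2 _ (getElem!_mem (by simpa using hs))
        | r + 1, s + 1 =>
          simp only [List.getElem!_cons_succ]
          exact hp r s (by omega) (by simpa using hs)
    · rintro ⟨hl, hb, hp⟩
      refine ⟨by simpa using hb 0 (by simp), ?_, by simpa using hl, ?_, ?_⟩
      · intro x hx
        obtain ⟨r, hr, rfl⟩ := mem_getElem! hx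
        have := hp 0 (r + 1) (by omega) (by simpa using hr)
        simpa using this
      · intro r hr
        have := hb (r + 1) (by simpa using hr)
        simpa using this
      · intro r s hrs hs
        have := hp (r + 1) (s + 1) (by omega) (by simpa using hs)
        simpa using this

lemma avB_iff : ∀ (m v : List ℕ), AvB m v ↔ v.length = m.length ∧
    (∀ r, r < v.length → v[r]! < m[r]!) ∧
    (∀ r s, r < s → s < v.length → v[s]! ≤ v[r]! ∨ m[r]! ≤ v[s]!)
  | [], [] => by simp [AvB]
  | [], v₁ :: vs => by simp [AvB]
  | m₁ :: ms, [] => by simp [AvB]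
  | m₁ :: ms, v₁ :: vs => by
    rw [show AvB (m₁ :: ms) (v₁ :: vs) =
      (v₁ < m₁ ∧ (∀ x ∈ vs, x ≤ v₁ ∨ m₁ ≤ x) ∧ AvB ms vs) from rfl, avB_iff ms vs]
    constructor
    · rintro ⟨h1, h2, hl, hb, hp⟩
      refine ⟨by simp [hl], ?_, ?_⟩
      · intro r hr
        match r with
        | 0 => simpa using h1
        | r + 1 =>
          simp only [List.getElem!_cons_succ]
          exact hb r (by simpa using hr)
      · intro r s hrs hs
        match r, s with
        | 0, s + 1 =>
          simp only [List.getElem!_cons_zero, List.getElem!_cons_succ]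
          exact h2 _ (getElem!_mem (by simpa using hs))
        | r + 1, s + 1 =>
          simp only [List.getElem!_cons_succ]
          exact hp r s (by omega) (by simpa using hs)
    · rintro ⟨hl, hb, hp⟩
      refine ⟨by simpa using hb 0 (by simp), ?_, by simpa using hl, ?_, ?_⟩
      · intro x hx
        obtain ⟨r, hr, rfl⟩ := mem_getElem! hx
        have := hp 0 (r + 1) (by omega) (by simpa using hr)
        simpa using this
      · intro r hr
        have := hb (r + 1) (by simpa using hr)
        simpa using this
      · intro r s hrs hs
        have := hp (r + 1) (s + 1) (by omega) (by simpa using hs)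
        simpa using this

noncomputable def actF (e : List ℕ) : Finset ℕ :=
  (Finset.range e.length).filter (fun k => e[k]! < Mf e k)

noncomputable def klist (e : List ℕ) : List ℕ := (actF e).sort (· ≤ ·)
noncomputable def mlist (e : List ℕ) : List ℕ := (klist e).map (fun k => Mf e k)
noncomputable def vlist (e : List ℕ) : List ℕ := (klist e).map (fun k => e[k]!)

noncomputable def tr (e w : List ℕ) : List ℕ :=
  List.ofFn (fun k : Fin e.length =>
    if (k : ℕ) ∈ actF e then w[(klist e).idxOf (k : ℕ)]! else e[(k : ℕ)]!)

lemma mem_actF {e : List ℕ} {k : ℕ} : k ∈ actF e ↔ k < e.length ∧ e[k]! < Mf e k := by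
  simp [actF]

lemma klist_mem {e : List ℕ} {k : ℕ} : k ∈ klist e ↔ k ∈ actF e := Finset.mem_sort _

lemma klist_get_mem {e : List ℕ} {r : ℕ} (hr : r < (klist e).length) :
    (klist e)[r]! ∈ actF e := by
  rw [← klist_mem, getElem!_pos (klist e) r hr]
  exact List.getElem_mem hr

lemma klist_strictMono {e : List ℕ} {r s : ℕ} (hrs : r < s) (hs : s < (klist e).length) :
    (klist e)[r]! < (klist e)[s]! := by
  have h := List.pairwise_iff_getElem.mp ((Finset.sortedLT_sort (actF e)).pairwise) r s
    (show r < (klist e).length by omega) (show s < (klist e).length from hs) hrs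
  rw [getElem!_pos (klist e) r (by omega), getElem!_pos (klist e) s hs]
  exact h

lemma klist_idx {e : List ℕ} {k : ℕ} (h : k ∈ actF e) :
    (klist e).idxOf k < (klist e).length ∧ (klist e)[(klist e).idxOf k]! = k := by
  have hm : k ∈ klist e := klist_mem.mpr h
  have h1 : (klist e).idxOf k < (klist e).length := List.idxOf_lt_length_iff.mpr hm
  exact ⟨h1, by rw [getElem!_pos (klist e) _ h1]; exact List.getElem_idxOf h1⟩

lemma klist_idx_getElem {e : List ℕ} {r : ℕ} (hr : r < (klist e).length) :
    (klist e).idxOf ((klist e)[r]!) = r := by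
  rw [getElem!_pos (klist e) r hr]
  exact List.Nodup.idxOf_getElem (Finset.sort_nodup _ _) r hr

lemma klist_idx_lt_idx {e : List ℕ} {k l : ℕ} (hk : k ∈ actF e) (hl : l ∈ actF e)
    (hkl : k < l) : (klist e).idxOf k < (klist e).idxOf l := by
  obtain ⟨h1, h2⟩ := klist_idx hk
  obtain ⟨h3, h4⟩ := klist_idx hl
  by_contra h
  rcases Nat.lt_or_ge ((klist e).idxOf l) ((klist e).idxOf k) with h5 | h5
  · have := klist_strictMono h5 h1
    omega
  · have : (klist e).idxOf k = (klist e).idxOf l := by omega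
    rw [this, h4] at h2
    omega

lemma mlist_len {e : List ℕ} : (mlist e).length = (klist e).length := by simp [mlist]
lemma vlist_len {e : List ℕ} : (vlist e).length = (klist e).length := by simp [vlist]

lemma mlist_get {e : List ℕ} {r : ℕ} (hr : r < (klist e).length) :
    (mlist e)[r]! = Mf e ((klist e)[r]!) := by
  rw [getElem!_pos (mlist e) r (by simpa [mlist] using hr), getElem!_pos (klist e) r hr]
  simp [mlist]

lemma vlist_get {e : List ℕ} {r : ℕ} (hr : r < (klist e).length) :
    (vlist e)[r]! = e[(klist e)[r]!]! := by
  rw [getElem!_pos (vlist e) r (by simpa [vlist] using hr), getElem!_pos (klist e) r hr]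
  simp [vlist]

lemma mlist_sorted (e : List ℕ) : (mlist e).Pairwise (· ≤ ·) := by
  rw [mlist, List.pairwise_map]
  exact (Finset.pairwise_sort _ _).imp (fun h => Mf_mono e h)

lemma avB_vlist_iff (e : List ℕ) :
    AvB (mlist e) (vlist e) ↔ ¬ ContainsPat e [2, 3, 0, 1] := by
  rw [avB_iff, contains2301_iff_Mf]
  constructor
  · rintro ⟨-, -, hp⟩ ⟨k, l, hkl, hl, h1, h2⟩
    have hk : k ∈ actF e := mem_actF.mpr ⟨by omega, by
      calc e[k]! < e[l]! := h1
        _ < Mf e k := h2⟩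
    have hl' : l ∈ actF e := mem_actF.mpr ⟨hl, lt_of_lt_of_le h2 (Mf_mono e (by omega))⟩
    obtain ⟨hr1, hr2⟩ := klist_idx hk
    obtain ⟨hs1, hs2⟩ := klist_idx hl'
    have hrs : (klist e).idxOf k < (klist e).idxOf l := klist_idx_lt_idx hk hl' hkl
    have := hp _ _ hrs (by rwa [vlist_len])
    rw [vlist_get (r := (klist e).idxOf k) (by omega),
      vlist_get (r := (klist e).idxOf l) hs1,
      mlist_get (r := (klist e).idxOf k) (by omega), hr2, hs2] at this
    omega
  · intro h
    refine ⟨by rw [vlist_len, mlist_len], ?_, ?_⟩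
    · intro r hr
      rw [vlist_len] at hr
      rw [vlist_get hr, mlist_get hr]
      exact (mem_actF.mp (klist_get_mem hr)).2
    · intro r s hrs hs
      rw [vlist_len] at hs
      rw [vlist_get (r := r) (by omega), vlist_get (r := s) hs, mlist_get (r := r) (by omega)]
      by_contra hc
      push_neg at hc
      obtain ⟨hc1, hc2⟩ := hc
      have hkl : (klist e)[r]! < (klist e)[s]! := klist_strictMono hrs hs
      have hlen : (klist e)[s]! < e.length := (mem_actF.mp (klist_get_mem hs)).1
      exact h ⟨_, _, hkl, hlen, by omega, by omega⟩

lemma incB_vlist_iff (e : List ℕ) :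
    IncB (mlist e) (vlist e) ↔ ¬ ContainsPat e [2, 3, 1, 0] := by
  rw [incB_iff, contains2310_iff_Mf]
  constructor
  · rintro ⟨-, -, hp⟩ ⟨k, l, hkl, hl, h1, h2⟩
    have hk : k ∈ actF e := mem_actF.mpr ⟨by omega, h2⟩
    have hl' : l ∈ actF e := mem_actF.mpr ⟨hl, by
      calc e[l]! < e[k]! := h1
        _ < Mf e k := h2
        _ ≤ Mf e l := Mf_mono e (by omega)⟩
    obtain ⟨hr1, hr2⟩ := klist_idx hk
    obtain ⟨hs1, hs2⟩ := klist_idx hl'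
    have hrs : (klist e).idxOf k < (klist e).idxOf l := klist_idx_lt_idx hk hl' hkl
    have := hp _ _ hrs (by rwa [vlist_len])
    rw [vlist_get (r := (klist e).idxOf k) (by omega),
      vlist_get (r := (klist e).idxOf l) hs1, hr2, hs2] at this
    omega
  · intro h
    refine ⟨by rw [vlist_len, mlist_len], ?_, ?_⟩
    · intro r hr
      rw [vlist_len] at hr
      rw [vlist_get hr, mlist_get hr]
      exact (mem_actF.mp (klist_get_mem hr)).2
    · intro r s hrs hs
      rw [vlist_len] at hs
      rw [vlist_get (r := r) (by omega), vlist_get (r := s) hs]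
      by_contra hc
      push_neg at hc
      have hkl : (klist e)[r]! < (klist e)[s]! := klist_strictMono hrs hs
      have hlen : (klist e)[s]! < e.length := (mem_actF.mp (klist_get_mem hs)).1
      have hact : e[(klist e)[r]!]! < Mf e ((klist e)[r]!) :=
        (mem_actF.mp (klist_get_mem (by omega))).2
      exact h ⟨_, _, hkl, hlen, by omega, hact⟩

lemma tr_length (e w : List ℕ) : (tr e w).length = e.length := by simp [tr]

lemma tr_get {e w : List ℕ} {k : ℕ} (hk : k < e.length) :
    (tr e w)[k]! = if k ∈ actF e then w[(klist e).idxOf k]! else e[k]! := by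
  rw [getElem!_pos (tr e w) k (by simpa [tr] using hk)]
  unfold tr
  rw [List.getElem_ofFn]

lemma tr_get_nonact {e w : List ℕ} {k : ℕ} (hk : k < e.length) (h : k ∉ actF e) :
    (tr e w)[k]! = e[k]! := by
  rw [tr_get hk, if_neg h]

lemma tr_get_act {e w : List ℕ} {k : ℕ} (h : k ∈ actF e) :
    (tr e w)[k]! = w[(klist e).idxOf k]! := by
  rw [tr_get (mem_actF.mp h).1, if_pos h]

section trans
variable {e w : List ℕ} (hwl : w.length = (klist e).length)
  (hwb : ∀ r, r < (klist e).length → w[r]! < (mlist e)[r]!)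

include hwb in
lemma tr_get_act_lt {k : ℕ} (h : k ∈ actF e) : (tr e w)[k]! < Mf e k := by
  rw [tr_get_act h]
  obtain ⟨h1, h2⟩ := klist_idx h
  have := hwb _ h1
  rwa [mlist_get h1, h2] at this

include hwb in
lemma Mf_tr : ∀ k, k ≤ e.length → Mf (tr e w) k = Mf e k := by
  apply Mf_stable
  intro i hi
  by_cases h : i ∈ actF e
  · exact Or.inr ⟨(mem_actF.mp h).2, tr_get_act_lt hwb h⟩
  · exact Or.inl (tr_get_nonact hi h)

include hwb in
lemma actF_tr : actF (tr e w) = actF e := by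
  ext k
  rw [mem_actF, mem_actF, tr_length]
  constructor
  · rintro ⟨hk, hlt⟩
    refine ⟨hk, ?_⟩
    rw [Mf_tr hwb k (le_of_lt hk)] at hlt
    by_contra h
    rw [tr_get_nonact hk (fun hc => h (mem_actF.mp hc).2)] at hlt
    exact h hlt
  · rintro ⟨hk, hlt⟩
    refine ⟨hk, ?_⟩
    rw [Mf_tr hwb k (le_of_lt hk)]
    exact tr_get_act_lt hwb (mem_actF.mpr ⟨hk, hlt⟩)

include hwb in
lemma klist_tr : klist (tr e w) = klist e := by
  rw [klist, klist, actF_tr hwb]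

include hwb in
lemma mlist_tr : mlist (tr e w) = mlist e := by
  rw [mlist, mlist, klist_tr hwb]
  apply List.map_congr_left
  intro k hk
  have hk' : k ∈ actF e := klist_mem.mp hk
  exact Mf_tr hwb k (le_of_lt (mem_actF.mp hk').1)

include hwl hwb in
lemma vlist_tr : vlist (tr e w) = w := by
  rw [vlist, klist_tr hwb]
  apply List.ext_getElem (by simp [hwl])
  intro r h1 h2
  rw [List.getElem_map]
  have hr : r < (klist e).length := by simpa using h1
  rw [← getElem!_pos w r h2, ← getElem!_pos (klist e) r hr, tr_get_act (klist_get_mem hr),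
    klist_idx_getElem hr]

include hwl hwb in
lemma tr_inv : tr (tr e w) (vlist e) = e := by
  apply List.ext_getElem (by rw [tr_length, tr_length])
  intro k h1 h2
  have hk : k < e.length := h2
  rw [← getElem!_pos (tr (tr e w) (vlist e)) k h1, ← getElem!_pos e k h2]
  by_cases h : k ∈ actF e
  · have h' : k ∈ actF (tr e w) := (actF_tr hwb).symm ▸ h
    rw [tr_get_act h', klist_tr hwb]
    obtain ⟨hi1, hi2⟩ := klist_idx h
    rw [vlist_get hi1, hi2]
  · have h' : k ∉ actF (tr e w) := fun hc => h ((actF_tr hwb) ▸ hc)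
    rw [tr_get_nonact (by rwa [tr_length]) h', tr_get_nonact hk h]

include hwb in
lemma Mf_le_bound {b : List ℕ} (hb : b.Pairwise (· ≤ ·)) (hlen : e.length = b.length)
    (he : ∀ i, i < e.length → e[i]! < b[i]!) :
    ∀ i, i < e.length → (tr e w)[i]! < b[i]! := by
  intro k hk
  by_cases h : k ∈ actF e
  · have h1 : (tr e w)[k]! < Mf e k := tr_get_act_lt hwb h
    have h2 : Mf e k ≤ b[k]! := by
      rw [Mf_le_iff]
      intro i j hij hjk hlt
      have hi : i < e.length := by omega
      have : b[i]! ≤ b[k]! := by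
        rw [getElem!_pos b i (by omega), getElem!_pos b k (by omega)]
        exact List.pairwise_iff_getElem.mp hb i k (by omega) (by omega) (by omega)
      have := he i hi
      omega
    omega
  · rw [tr_get_nonact hk h]
    exact he k hk

end trans


lemma psi_spec' : ∀ (v m : List ℕ), m.Pairwise (· ≤ ·) →
    AvB m v → IncB m (psi m v) ∧ psiInv m (psi m v) = v :=
  fun v m hs ha => psi_spec v.length v m le_rfl hs ha

lemma psiInv_spec' : ∀ (w m : List ℕ), m.Pairwise (· ≤ ·) →
    IncB m w → AvB m (psiInv m w) ∧ psi m (psiInv m w) = w :=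
  fun w m hs hi => psiInv_spec w.length w m le_rfl hs hi

noncomputable def Phi (e : List ℕ) : List ℕ := tr e (psi (mlist e) (vlist e))
noncomputable def PhiInv (e : List ℕ) : List ℕ := tr e (psiInv (mlist e) (vlist e))

section phi
variable {e : List ℕ}

lemma phi_pack (ha : ¬ ContainsPat e [2, 3, 0, 1]) :
    (psi (mlist e) (vlist e)).length = (klist e).length ∧
    (∀ r, r < (klist e).length → (psi (mlist e) (vlist e))[r]! < (mlist e)[r]!) ∧
    IncB (mlist e) (psi (mlist e) (vlist e)) ∧
    psiInv (mlist e) (psi (mlist e) (vlist e)) = vlist e := by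
  have hA : AvB (mlist e) (vlist e) := (avB_vlist_iff e).mpr ha
  obtain ⟨hInc, hRT⟩ := psi_spec' (vlist e) (mlist e) (mlist_sorted e) hA
  obtain ⟨hl, hb, -⟩ := (incB_iff _ _).mp hInc
  exact ⟨hl.trans mlist_len, fun r hr => hb r (by rw [hl, mlist_len]; exact hr), hInc, hRT⟩

lemma Phi_avoids (ha : ¬ ContainsPat e [2, 3, 0, 1]) :
    ¬ ContainsPat (Phi e) [2, 3, 1, 0] := by
  obtain ⟨hwl, hwb, hInc, -⟩ := phi_pack ha
  rw [← incB_vlist_iff, Phi, mlist_tr hwb, vlist_tr hwl hwb]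
  exact hInc

lemma Phi_inv (ha : ¬ ContainsPat e [2, 3, 0, 1]) : PhiInv (Phi e) = e := by
  obtain ⟨hwl, hwb, hInc, hRT⟩ := phi_pack ha
  rw [PhiInv, Phi, mlist_tr hwb, vlist_tr hwl hwb, hRT]
  exact tr_inv hwl hwb

lemma phiInv_pack (ha : ¬ ContainsPat e [2, 3, 1, 0]) :
    (psiInv (mlist e) (vlist e)).length = (klist e).length ∧
    (∀ r, r < (klist e).length → (psiInv (mlist e) (vlist e))[r]! < (mlist e)[r]!) ∧
    AvB (mlist e) (psiInv (mlist e) (vlist e)) ∧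
    psi (mlist e) (psiInv (mlist e) (vlist e)) = vlist e := by
  have hA : IncB (mlist e) (vlist e) := (incB_vlist_iff e).mpr ha
  obtain ⟨hAv, hRT⟩ := psiInv_spec' (vlist e) (mlist e) (mlist_sorted e) hA
  obtain ⟨hl, hb, -⟩ := (avB_iff _ _).mp hAv
  exact ⟨hl.trans mlist_len, fun r hr => hb r (by rw [hl, mlist_len]; exact hr), hAv, hRT⟩

lemma PhiInv_avoids (ha : ¬ ContainsPat e [2, 3, 1, 0]) :
    ¬ ContainsPat (PhiInv e) [2, 3, 0, 1] := by
  obtain ⟨hwl, hwb, hAv, -⟩ := phiInv_pack ha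
  rw [← avB_vlist_iff, PhiInv, mlist_tr hwb, vlist_tr hwl hwb]
  exact hAv

lemma PhiInv_inv (ha : ¬ ContainsPat e [2, 3, 1, 0]) : Phi (PhiInv e) = e := by
  obtain ⟨hwl, hwb, hAv, hRT⟩ := phiInv_pack ha
  rw [Phi, PhiInv, mlist_tr hwb, vlist_tr hwl hwb, hRT]
  exact tr_inv hwl hwb

lemma Phi_length : (Phi e).length = e.length := tr_length _ _
lemma PhiInv_length : (PhiInv e).length = e.length := tr_length _ _

lemma Phi_bounds {b : List ℕ} (hb : b.Pairwise (· ≤ ·)) (hlen : e.length = b.length)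
    (he : ∀ i, i < e.length → e[i]! < b[i]!) (ha : ¬ ContainsPat e [2, 3, 0, 1]) :
    ∀ i, i < e.length → (Phi e)[i]! < b[i]! := by
  obtain ⟨hwl, hwb, -, -⟩ := phi_pack ha
  exact Mf_le_bound hwb hb hlen he

lemma PhiInv_bounds {b : List ℕ} (hb : b.Pairwise (· ≤ ·)) (hlen : e.length = b.length)
    (he : ∀ i, i < e.length → e[i]! < b[i]!) (ha : ¬ ContainsPat e [2, 3, 1, 0]) :
    ∀ i, i < e.length → (PhiInv e)[i]! < b[i]! := by
  obtain ⟨hwl, hwb, -, -⟩ := phiInv_pack ha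
  exact Mf_le_bound hwb hb hlen he

end phi

/-- Theorem: `|I_S(2301)| = |I_S(2310)|` for any finite set `S` of positive integers. -/
theorem stmt_13 (S : Finset ℕ) (hS : ∀ x ∈ S, 0 < x) :
    (SInvAvoid S [2, 3, 0, 1]).ncard = (SInvAvoid S [2, 3, 1, 0]).ncard := by
  classical
  have hbs : (S.sort (· ≤ ·)).Pairwise (· ≤ ·) := Finset.pairwise_sort _ _
  have hblen : (S.sort (· ≤ ·)).length = S.card := Finset.length_sort _
  have hmem : ∀ (p e : List ℕ), e ∈ SInvAvoid S p ↔
      (e.length = S.card ∧ ∀ i : ℕ, i < S.card → e[i]! < (S.sort (· ≤ ·))[i]!) ∧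
        ¬ ContainsPat e p := by
    intro p e
    rfl
  have hMapsTo : Set.MapsTo Phi (SInvAvoid S [2, 3, 0, 1]) (SInvAvoid S [2, 3, 1, 0]) := by
    intro e he
    rw [hmem] at he ⊢
    obtain ⟨⟨hl, hbnd⟩, hav⟩ := he
    refine ⟨⟨Phi_length.trans hl, ?_⟩, Phi_avoids hav⟩
    intro i hi
    exact Phi_bounds hbs (by omega) (fun i hi => hbnd i (by omega)) hav i (by omega)
  have hMapsTo' : Set.MapsTo PhiInv (SInvAvoid S [2, 3, 1, 0]) (SInvAvoid S [2, 3, 0, 1]) := by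
    intro e he
    rw [hmem] at he ⊢
    obtain ⟨⟨hl, hbnd⟩, hav⟩ := he
    refine ⟨⟨PhiInv_length.trans hl, ?_⟩, PhiInv_avoids hav⟩
    intro i hi
    exact PhiInv_bounds hbs (by omega) (fun i hi => hbnd i (by omega)) hav i (by omega)
  have hInv : Set.InvOn PhiInv Phi (SInvAvoid S [2, 3, 0, 1]) (SInvAvoid S [2, 3, 1, 0]) := by
    constructor
    · intro e he
      exact Phi_inv ((hmem _ e).mp he).2
    · intro e he
      exact PhiInv_inv ((hmem _ e).mp he).2
  have hbij : Set.BijOn Phi (SInvAvoid S [2, 3, 0, 1]) (SInvAvoid S [2, 3, 1, 0]) :=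
    hInv.bijOn hMapsTo hMapsTo'
  calc (SInvAvoid S [2, 3, 0, 1]).ncard
      = (Phi '' (SInvAvoid S [2, 3, 0, 1])).ncard :=
        (Set.ncard_image_of_injOn hbij.injOn).symm
    _ = (SInvAvoid S [2, 3, 1, 0]).ncard := by rw [hbij.image_eq]
end

section
/- For all n ≥ 1, the number of inversion sequences of length n avoiding the pattern 3210 equals the number of inversion sequences of length n avoiding the pattern 3201; i.e. |I_n(3210)| = |I_n(3201)|. -/
namespace Stmt16

def Mx (a : ℕ → ℕ) : ℕ → ℕ
  | 0 => 0
  | k+1 => max (Mx a k) (a k)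

def Cx (a : ℕ → ℕ) : ℕ → ℕ
  | 0 => 0
  | k+1 => if a k < Mx a k then max (Cx a k) (a k) else Cx a k

lemma Mx_lt_iff {a : ℕ → ℕ} {t k : ℕ} : t < Mx a k ↔ ∃ i, i < k ∧ t < a i := by
  induction k with
  | zero => simp [Mx]
  | succ k ih =>
    simp only [Mx, lt_max_iff, ih]
    constructor
    · rintro (⟨i, hi, h⟩ | h)
      · exact ⟨i, by omega, h⟩
      · exact ⟨k, by omega, h⟩
    · rintro ⟨i, hi, h⟩
      rcases Nat.lt_succ_iff_lt_or_eq.mp hi with h' | rfl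
      · exact Or.inl ⟨i, h', h⟩
      · exact Or.inr h

lemma Cx_lt_iff {a : ℕ → ℕ} {t k : ℕ} :
    t < Cx a k ↔ ∃ j, j < k ∧ a j < Mx a j ∧ t < a j := by
  induction k with
  | zero => simp [Cx]
  | succ k ih =>
    by_cases h : a k < Mx a k
    · simp only [Cx, if_pos h, lt_max_iff, ih]
      constructor
      · rintro (⟨j, hj, h1, h2⟩ | h2)
        · exact ⟨j, by omega, h1, h2⟩
        · exact ⟨k, by omega, h, h2⟩
      · rintro ⟨j, hj, h1, h2⟩
        rcases Nat.lt_succ_iff_lt_or_eq.mp hj with h' | rfl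
        · exact Or.inl ⟨j, h', h1, h2⟩
        · exact Or.inr h2
    · simp only [Cx, if_neg h, ih]
      constructor
      · rintro ⟨j, hj, h1, h2⟩; exact ⟨j, by omega, h1, h2⟩
      · rintro ⟨j, hj, h1, h2⟩
        rcases Nat.lt_succ_iff_lt_or_eq.mp hj with h' | rfl
        · exact ⟨j, h', h1, h2⟩
        · exact absurd h1 h
  
lemma Mx_mono {a : ℕ → ℕ} {k l : ℕ} (h : k ≤ l) : Mx a k ≤ Mx a l := by
  induction l with
  | zero => simp_all
  | succ l ih =>
    rcases Nat.lt_succ_iff_lt_or_eq.mp (Nat.lt_succ_of_le h) with h' | rfl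
    · exact le_trans (ih (by omega)) (le_max_left _ _)
    · exact le_refl _

lemma Cx_mono {a : ℕ → ℕ} {k l : ℕ} (h : k ≤ l) : Cx a k ≤ Cx a l := by
  induction l with
  | zero => simp_all
  | succ l ih =>
    rcases Nat.lt_succ_iff_lt_or_eq.mp (Nat.lt_succ_of_le h) with h' | rfl
    · refine le_trans (ih (by omega)) ?_
      by_cases hc : a l < Mx a l <;> simp [Cx, hc]
    · exact le_refl _

lemma Cx_le_Mx {a : ℕ → ℕ} {k : ℕ} : Cx a k ≤ Mx a k := by
  induction k with
  | zero => simp [Cx, Mx]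
  | succ k ih =>
    by_cases hc : a k < Mx a k <;>
      simp only [Cx, Mx, if_pos, if_neg, hc, ite_true, ite_false] <;> omega

lemma Mx_le {a : ℕ → ℕ} {k : ℕ} (h : ∀ i, i < k → a i ≤ i) : Mx a k ≤ k := by
  induction k with
  | zero => simp [Mx]
  | succ k ih =>
    have := h k (by omega)
    have := ih (fun i hi => h i (by omega))
    simp only [Mx]; omega

lemma invariance {a b : ℕ → ℕ} {n : ℕ}
    (h : ∀ k, k < n → (Cx a k ≤ a k → b k = a k) ∧ (a k < Cx a k → b k < Cx a k)) :
    ∀ k, k ≤ n → Mx b k = Mx a k ∧ Cx b k = Cx a k := by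
  intro k hk
  induction k with
  | zero => simp [Mx, Cx]
  | succ k ih =>
    obtain ⟨hM, hC⟩ := ih (by omega)
    have hCM : Cx a k ≤ Mx a k := by
      clear * -
      induction k with
      | zero => simp [Cx, Mx]
      | succ k ih =>
        by_cases hc : a k < Mx a k <;>
          simp only [Cx, Mx, hc, ite_true, ite_false] <;> omega
    obtain ⟨h1, h2⟩ := h k (by omega)
    by_cases hlow : a k < Cx a k
    · have hb := h2 hlow
      constructor
      · simp only [Mx, hM]; omega
      · simp only [Cx, hM, hC]
        have c1 : b k < Mx a k := by omega
        have c2 : a k < Mx a k := by omega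
        simp only [if_pos c1, if_pos c2]
        omega
    · have hb := h1 (by omega)
      constructor
      · simp only [Mx, hM, hb]
      · simp only [Cx, hM, hC, hb]

lemma orderIso_3210 {x0 x1 x2 x3 : ℕ} :
    OrderIsoSeq [x0,x1,x2,x3] [3,2,1,0] ↔ (x1 < x0 ∧ x2 < x1 ∧ x3 < x2) := by
  constructor
  · rintro ⟨-, h⟩
    have h01 := h 0 1 (by simp) (by simp)
    have h12 := h 1 2 (by simp) (by simp)
    have h23 := h 2 3 (by simp) (by simp)
    simp at h01 h12 h23
    omega
  · rintro ⟨h1, h2, h3⟩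
    refine ⟨by simp, ?_⟩
    intro i j hi hj
    simp at hi hj
    interval_cases i <;> interval_cases j <;> simp <;> omega

lemma orderIso_3201 {x0 x1 x2 x3 : ℕ} :
    OrderIsoSeq [x0,x1,x2,x3] [3,2,0,1] ↔ (x1 < x0 ∧ x2 < x3 ∧ x3 < x1) := by
  constructor
  · rintro ⟨-, h⟩
    have h01 := h 0 1 (by simp) (by simp)
    have h23 := h 2 3 (by simp) (by simp)
    have h13 := h 1 3 (by simp) (by simp)
    simp at h01 h23 h13
    omega
  · rintro ⟨h1, h2, h3⟩
    refine ⟨by simp, ?_⟩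
    intro i j hi hj
    simp at hi hj
    interval_cases i <;> interval_cases j <;> simp <;> omega

lemma sublist4 {e : List ℕ} {i0 i1 i2 i3 : ℕ} (h01 : i0 < i1) (h12 : i1 < i2)
    (h23 : i2 < i3) (h3 : i3 < e.length) :
    List.Sublist [e[i0]!, e[i1]!, e[i2]!, e[i3]!] e := by
  rw [List.sublist_iff_exists_fin_orderEmbedding_get_eq]
  refine ⟨OrderEmbedding.ofStrictMono
    (fun t => ⟨if t.1 = 0 then i0 else if t.1 = 1 then i1 else if t.1 = 2 then i2 else i3,
      by split_ifs <;> omega⟩) ?_, ?_⟩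
  · intro x y hxy
    have hx := x.isLt
    have hy := y.isLt
    simp only [List.length_cons, List.length_nil] at hx hy
    have hxy' : x.1 < y.1 := hxy
    simp only [Fin.mk_lt_mk, Fin.lt_def]
    split_ifs <;> omega
  · intro ix
    have hix := ix.isLt
    simp only [List.length_cons, List.length_nil] at hix
    rcases ix with ⟨ix, hix'⟩
    simp only [OrderEmbedding.coe_ofStrictMono, List.get_eq_getElem]
    interval_cases ix <;> simp <;>
      [rw [getElem?_pos e i0 (by omega), Option.getD_some]; rw [getElem?_pos e i1 (by omega), Option.getD_some];
       rw [getElem?_pos e i2 (by omega), Option.getD_some]; rw [getElem?_pos e i3 (by omega), Option.getD_some]]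

lemma sublist4' {e s : List ℕ} (hs : List.Sublist s e) (hlen : s.length = 4) :
    ∃ i0 i1 i2 i3, i0 < i1 ∧ i1 < i2 ∧ i2 < i3 ∧ i3 < e.length ∧
      s = [e[i0]!, e[i1]!, e[i2]!, e[i3]!] := by
  rw [List.sublist_iff_exists_fin_orderEmbedding_get_eq] at hs
  obtain ⟨f, hf⟩ := hs
  have l0 : 0 < s.length := by omega
  have l1 : 1 < s.length := by omega
  have l2 : 2 < s.length := by omega
  have l3 : 3 < s.length := by omega
  refine ⟨f ⟨0, l0⟩, f ⟨1, l1⟩, f ⟨2, l2⟩, f ⟨3, l3⟩, ?_, ?_, ?_, ?_, ?_⟩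
  · exact f.strictMono (by simp [Fin.lt_def])
  · exact f.strictMono (by simp [Fin.lt_def])
  · exact f.strictMono (by simp [Fin.lt_def])
  · exact (f ⟨3, l3⟩).isLt
  · apply List.ext_getElem (by simp [hlen])
    intro t ht1 ht2
    simp only [hlen] at ht1
    have g0 := hf ⟨0, l0⟩
    have g1 := hf ⟨1, l1⟩
    have g2 := hf ⟨2, l2⟩
    have g3 := hf ⟨3, l3⟩
    rw [List.get_eq_getElem, List.get_eq_getElem] at g0 g1 g2 g3
    interval_cases t <;> simp only [List.getElem_cons_zero, List.getElem_cons_succ]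
    · rw [getElem!_pos e _ (f ⟨0, l0⟩).isLt]; exact g0
    · rw [getElem!_pos e _ (f ⟨1, l1⟩).isLt]; exact g1
    · rw [getElem!_pos e _ (f ⟨2, l2⟩).isLt]; exact g2
    · rw [getElem!_pos e _ (f ⟨3, l3⟩).isLt]; exact g3

def af (e : List ℕ) : ℕ → ℕ := fun i => e[i]!

lemma contains3210_iff {e : List ℕ} :
    ContainsPat e [3,2,1,0] ↔
      ∃ k l, k < l ∧ l < e.length ∧ af e l < af e k ∧ af e k < Cx (af e) k := by
  constructor
  · rintro ⟨s, hs, hiso⟩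
    have hlen : s.length = 4 := by simpa using hiso.1
    obtain ⟨i0, i1, i2, i3, h01, h12, h23, h3, rfl⟩ := sublist4' hs hlen
    rw [orderIso_3210] at hiso
    obtain ⟨r1, r2, r3⟩ := hiso
    refine ⟨i2, i3, h23, h3, r3, ?_⟩
    rw [Cx_lt_iff]
    exact ⟨i1, h12, Mx_lt_iff.mpr ⟨i0, h01, r1⟩, r2⟩
  · rintro ⟨k, l, hkl, hl, h1, h2⟩
    rw [Cx_lt_iff] at h2
    obtain ⟨j, hjk, hdom, hjgt⟩ := h2
    rw [Mx_lt_iff] at hdom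
    obtain ⟨i, hij, higt⟩ := hdom
    exact ⟨_, sublist4 hij hjk hkl hl, orderIso_3210.mpr ⟨higt, hjgt, h1⟩⟩

lemma contains3201_iff {e : List ℕ} :
    ContainsPat e [3,2,0,1] ↔
      ∃ k l, k < l ∧ l < e.length ∧ af e k < af e l ∧ af e l < Cx (af e) k := by
  constructor
  · rintro ⟨s, hs, hiso⟩
    have hlen : s.length = 4 := by simpa using hiso.1
    obtain ⟨i0, i1, i2, i3, h01, h12, h23, h3, rfl⟩ := sublist4' hs hlen
    rw [orderIso_3201] at hiso
    obtain ⟨r1, r2, r3⟩ := hiso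
    refine ⟨i2, i3, h23, h3, r2, ?_⟩
    rw [Cx_lt_iff]
    exact ⟨i1, h12, Mx_lt_iff.mpr ⟨i0, h01, r1⟩, r3⟩
  · rintro ⟨k, l, hkl, hl, h1, h2⟩
    rw [Cx_lt_iff] at h2
    obtain ⟨j, hjk, hdom, hjgt⟩ := h2
    rw [Mx_lt_iff] at hdom
    obtain ⟨i, hij, higt⟩ := hdom
    exact ⟨_, sublist4 hij hjk hkl hl, orderIso_3201.mpr ⟨higt, h1, hjgt⟩⟩

def Feas (vs cs : List ℕ) : Prop := ∀ t, t < vs.length → vs[t]! < cs[t]!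

def Bcond (vs cs : List ℕ) : Prop :=
  ∀ s t, s < t → t < vs.length → ¬(vs[s]! < vs[t]! ∧ vs[t]! < cs[s]!)

def MonoCs (cs : List ℕ) : Prop := ∀ s t, s ≤ t → t < cs.length → cs[s]! ≤ cs[t]!

lemma getElem!_cons_succ' (x : ℕ) (xs : List ℕ) (t : ℕ) : (x :: xs)[t+1]! = xs[t]! := by
  by_cases h : t < xs.length
  · rw [getElem!_pos (x :: xs) (t+1) (by simpa using Nat.succ_lt_succ h), getElem!_pos xs t h]
    simp
  · rw [getElem!_neg (x :: xs) (t+1) (by simp; omega), getElem!_neg xs t h]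

lemma getElem!_cons_zero' (x : ℕ) (xs : List ℕ) : (x :: xs)[0]! = x := by
  rw [getElem!_pos (x :: xs) 0 (by simp)]; simp

lemma countP_ge {v : List ℕ} {P : ℕ → Bool} {t : ℕ} (ht : t < v.length)
    (h : ∀ s, s ≤ t → P v[s]! = true) : t + 1 ≤ v.countP P := by
  induction v generalizing t with
  | nil => simp at ht
  | cons x xs ih =>
    rw [List.countP_cons]
    have hx : P x = true := by simpa [getElem!_cons_zero'] using h 0 (by omega)
    rcases t with _ | t
    · simp [hx]
    · have := ih (by simpa using ht) (fun s hs => by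
        simpa [getElem!_cons_succ'] using h (s+1) (by omega))
      simp only [hx, if_pos]
      omega

lemma sorted_getElem!_le {w : List ℕ} {s t : ℕ} (hw : w.Pairwise (· ≤ ·)) (hst : s ≤ t)
    (ht : t < w.length) : w[s]! ≤ w[t]! := by
  rcases eq_or_lt_of_le hst with rfl | hlt
  · exact le_refl _
  · rw [getElem!_pos w s (by omega), getElem!_pos w t ht]
    exact List.pairwise_iff_getElem.mp hw s t (by omega) ht hlt

lemma sorted_getElem!_lt {w : List ℕ} {c t : ℕ} (hw : w.Pairwise (· ≤ ·)) (ht : t < w.length)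
    (hcount : t + 1 ≤ w.countP (fun x => decide (x < c))) : w[t]! < c := by
  induction w generalizing t with
  | nil => simp at ht
  | cons x xs ih =>
    rcases t with _ | t
    · rw [getElem!_cons_zero']
      have hpos : 0 < (x :: xs).countP (fun x => decide (x < c)) := by omega
      obtain ⟨y, hy, hyc⟩ := List.countP_pos_iff.mp hpos
      have : x ≤ y := by
        rcases List.mem_cons.mp hy with rfl | hy'
        · exact le_refl _
        · exact List.rel_of_pairwise_cons hw hy'
      simp at hyc; omega
    · rw [getElem!_cons_succ']
      refine ih hw.of_cons (by simpa using ht) ?_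
      rw [List.countP_cons] at hcount
      split at hcount <;> omega

lemma mem_getElem! {v : List ℕ} {t : ℕ} (ht : t < v.length) : v[t]! ∈ v := by
  rw [getElem!_pos v t ht]; exact List.getElem_mem ht

lemma exists_getElem!_of_mem {v : List ℕ} {z : ℕ} (h : z ∈ v) :
    ∃ t, t < v.length ∧ v[t]! = z := by
  obtain ⟨i, hi, rfl⟩ := List.mem_iff_getElem.mp h
  exact ⟨i, hi, getElem!_pos v i hi⟩



lemma feas_mergeSort {vs cs : List ℕ} (hlen : vs.length = cs.length) (hmono : MonoCs cs)
    (hf : Feas vs cs) : Feas (vs.mergeSort (· ≤ ·)) cs := by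
  intro t ht
  rw [List.length_mergeSort] at ht
  have hsort : (vs.mergeSort (· ≤ ·)).Pairwise (· ≤ ·) := by
    simpa using List.pairwise_mergeSort' (· ≤ ·) vs
  refine sorted_getElem!_lt (c := cs[t]!) hsort (by rwa [List.length_mergeSort]) ?_
  rw [(List.mergeSort_perm vs (· ≤ ·)).countP_eq]
  refine countP_ge ht (fun s hs => ?_)
  have h1 : vs[s]! < cs[s]! := hf s (by omega)
  have h2 : cs[s]! ≤ cs[t]! := hmono s t hs (by omega)
  simp only [decide_eq_true_eq]; omega

lemma bcond_unique : ∀ {cs vs vs' : List ℕ}, vs.length = cs.length → vs'.length = cs.length →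
    MonoCs cs → Feas vs cs → Feas vs' cs → Bcond vs cs → Bcond vs' cs → vs.Perm vs' →
    vs = vs' := by
  intro cs
  induction cs with
  | nil =>
    intro vs vs' h h' _ _ _ _ _ _
    rw [List.length_eq_zero_iff.mp h, List.length_eq_zero_iff.mp h']
  | cons c cs ih =>
    rintro (_ | ⟨x, xs⟩) vs'2 h h' hmono hf hf' hb hb' hperm
    · simp at h
    rcases vs'2 with _ | ⟨y, ys⟩
    · simp at h'
    have key : ∀ (z : ℕ) (v : List ℕ), Feas v (c :: cs) → Bcond v (c :: cs) →
        z ∈ v → z < c → z ≤ v[0]! := by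
      intro z v hfv hbv hz hzc
      obtain ⟨u, hu, rfl⟩ := exists_getElem!_of_mem hz
      rcases u with _ | u
      · exact le_refl _
      · by_contra hcon
        exact hbv 0 (u+1) (by omega) hu ⟨by omega, by rwa [getElem!_cons_zero']⟩
    have hx0 : (x :: xs)[0]! = x := getElem!_cons_zero' _ _
    have hy0 : (y :: ys)[0]! = y := getElem!_cons_zero' _ _
    have hxc : x < c := by
      have := hf 0 (by simp)
      rwa [hx0, getElem!_cons_zero'] at this
    have hyc : y < c := by
      have := hf' 0 (by simp)
      rwa [hy0, getElem!_cons_zero'] at this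
    have hxy : x ≤ y := by
      have := key x (y :: ys) hf' hb' (hperm.mem_iff.mp (by simp)) hxc
      rwa [hy0] at this
    have hyx : y ≤ x := by
      have := key y (x :: xs) hf hb (hperm.mem_iff.mpr (by simp)) hyc
      rwa [hx0] at this
    have hxy' : x = y := by omega
    subst hxy'
    have htl : xs = ys := by
      refine ih (by simpa using h) (by simpa using h') ?_ ?_ ?_ ?_ ?_ (hperm.cons_inv)
      · intro s t hst ht
        have := hmono (s+1) (t+1) (by omega) (by simpa using ht)
        rwa [getElem!_cons_succ', getElem!_cons_succ'] at this
      · intro t ht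
        have := hf (t+1) (by simpa using ht)
        rwa [getElem!_cons_succ', getElem!_cons_succ'] at this
      · intro t ht
        have := hf' (t+1) (by simpa using ht)
        rwa [getElem!_cons_succ', getElem!_cons_succ'] at this
      · intro s t hst ht
        have := hb (s+1) (t+1) (by omega) (by simpa using ht)
        rwa [getElem!_cons_succ', getElem!_cons_succ', getElem!_cons_succ'] at this
      · intro s t hst ht
        have := hb' (s+1) (t+1) (by omega) (by simpa using ht)
        rwa [getElem!_cons_succ', getElem!_cons_succ', getElem!_cons_succ'] at this
    rw [htl]



lemma perm_getElem!_cons_eraseIdx {vs : List ℕ} {j : ℕ} (hj : j < vs.length) :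
    (vs[j]! :: vs.eraseIdx j).Perm vs := by
  rw [getElem!_pos vs j hj, List.eraseIdx_eq_take_drop_succ]
  calc (vs[j] :: (vs.take j ++ vs.drop (j+1))).Perm (vs.take j ++ vs[j] :: vs.drop (j+1)) :=
        List.perm_middle.symm
    _ = vs := by rw [← List.drop_eq_getElem_cons hj, List.take_append_drop]

lemma getElem!_eraseIdx_lt {vs : List ℕ} {j t : ℕ} (hj : j < vs.length) (ht : t < j) :
    (vs.eraseIdx j)[t]! = vs[t]! := by
  have h1 : t < (vs.eraseIdx j).length := by
    rw [List.length_eraseIdx_of_lt hj]; omega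
  rw [getElem!_pos (vs.eraseIdx j) t h1, getElem!_pos vs t (by omega), List.getElem_eraseIdx_of_lt]
  exact ht

lemma getElem!_eraseIdx_ge {vs : List ℕ} {j t : ℕ} (hj : j < vs.length) (ht : j ≤ t)
    (ht2 : t < vs.length - 1) : (vs.eraseIdx j)[t]! = vs[t+1]! := by
  have h1 : t < (vs.eraseIdx j).length := by
    rw [List.length_eraseIdx_of_lt hj]; omega
  rw [getElem!_pos (vs.eraseIdx j) t h1, getElem!_pos vs (t+1) (by omega), List.getElem_eraseIdx_of_ge h1 ht]

lemma bcond_exists : ∀ {cs vs : List ℕ}, vs.length = cs.length → MonoCs cs →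
    vs.Pairwise (· ≤ ·) → Feas vs cs →
    ∃ ws, ws.Perm vs ∧ ws.length = cs.length ∧ Feas ws cs ∧ Bcond ws cs := by
  intro cs
  induction cs with
  | nil =>
    intro vs h _ _ _
    exact ⟨[], by rw [List.length_eq_zero_iff.mp h], by simp, fun t ht => by simp at ht,
      fun s t hst ht => by simp at ht⟩
  | cons c cs ih =>
    intro vs h hmono hsort hf
    have hvlen : vs.length = cs.length + 1 := by simpa using h
    have hc0 : (c :: cs)[0]! = c := getElem!_cons_zero' _ _
    have hcs : ∀ t, t < cs.length → (c :: cs)[t+1]! = cs[t]! := fun t _ => getElem!_cons_succ' _ _ _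
    have hv0 : vs[0]! < c := by
      have := hf 0 (by omega)
      rwa [hc0] at this
    set q : ℕ := vs.countP (fun x => decide (x < c)) with hq
    have hq1 : 1 ≤ q := by
      refine countP_ge (t := 0) (by omega) (fun s hs => ?_)
      have : s = 0 := by omega
      subst this
      simp only [decide_eq_true_eq]; omega
    have hqle : q ≤ vs.length := List.countP_le_length
    have hCband : ∀ u, u < q → vs[u]! < c := by
      intro u hu
      exact sorted_getElem!_lt hsort (by omega) (by omega)
    have hDband : ∀ u, q ≤ u → u < vs.length → c ≤ vs[u]! := by
      intro u huq hul
      by_contra hcon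
      have : u + 1 ≤ q := by
        rw [hq]
        refine countP_ge hul (fun s hs => ?_)
        have h1 : vs[s]! ≤ vs[u]! := sorted_getElem!_le hsort hs hul
        simp only [decide_eq_true_eq]; omega
      omega
    set j : ℕ := q - 1 with hj
    have hjlt : j < vs.length := by omega
    have hjc : vs[j]! < c := hCband j (by omega)
    set rest : List ℕ := vs.eraseIdx j with hrest
    have hrestlen : rest.length = cs.length := by
      rw [hrest, List.length_eraseIdx_of_lt hjlt]; omega
    have hrestsort : rest.Pairwise (· ≤ ·) := List.Pairwise.sublist (List.eraseIdx_sublist vs j) hsort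
    have hrestfeas : Feas rest cs := by
      intro t ht
      rw [hrestlen] at ht
      have hmt : (c :: cs)[t]! ≤ (c :: cs)[t+1]! := hmono t (t+1) (by omega) (by simp; omega)
      by_cases htj : t < j
      · rw [getElem!_eraseIdx_lt hjlt htj]
        have h1 := hf t (by omega)
        rw [hcs t ht] at hmt
        omega
      · rw [getElem!_eraseIdx_ge hjlt (by omega) (by omega), ← hcs t ht]
        exact hf (t+1) (by omega)
    have hmonocs : MonoCs cs := by
      intro s t hst ht
      have := hmono (s+1) (t+1) (by omega) (by simp; omega)
      rwa [hcs s (by omega), hcs t (by omega)] at this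
    obtain ⟨ws', hperm', hlen', hfeas', hb'⟩ := ih hrestlen hmonocs hrestsort hrestfeas
    refine ⟨vs[j]! :: ws', ?_, by simpa using hlen', ?_, ?_⟩
    · exact (hperm'.cons vs[j]!).trans (perm_getElem!_cons_eraseIdx hjlt)
    · intro t ht
      rcases t with _ | t
      · rw [getElem!_cons_zero', hc0]; exact hjc
      · rw [List.length_cons] at ht
        rw [getElem!_cons_succ', hcs t (by omega)]
        exact hfeas' t (by omega)
    · intro s t hst ht
      rcases t with _ | t
      · omega
      rcases s with _ | s
      · rintro ⟨hlt1, hlt2⟩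
        rw [getElem!_cons_zero'] at hlt1 hlt2
        rw [getElem!_cons_succ'] at hlt1 hlt2
        have hzmem : ws'[t]! ∈ ws' := mem_getElem! (by simpa using ht)
        have hzrest : ws'[t]! ∈ rest := hperm'.mem_iff.mp hzmem
        have hzvs : ws'[t]! ∈ vs := (List.eraseIdx_sublist vs j).subset hzrest
        obtain ⟨u, hu, hueq⟩ := exists_getElem!_of_mem hzvs
        have huq : u < q := by
          by_contra hcon
          have := hDband u (by omega) hu
          omega
        have : vs[u]! ≤ vs[j]! := sorted_getElem!_le hsort (by omega) hjlt
        omega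
      · rintro ⟨hlt1, hlt2⟩
        rw [List.length_cons] at ht
        rw [getElem!_cons_succ', getElem!_cons_succ'] at hlt1 hlt2
        exact hb' s t (by omega) (by omega) ⟨hlt1, hlt2⟩


def lowL (e : List ℕ) : List ℕ :=
  (List.range e.length).filter (fun k => decide (e[k]! < Cx (af e) k))

def VSl (e : List ℕ) : List ℕ := (lowL e).map (af e)

def CSl (e : List ℕ) : List ℕ := (lowL e).map (fun k => Cx (af e) k)

def retoggle (e ws : List ℕ) : List ℕ :=
  (List.range e.length).map (fun k =>
    if e[k]! < Cx (af e) k then ws[(lowL e).idxOf k]! else e[k]!)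

def toggle (e : List ℕ) : List ℕ := retoggle e ((VSl e).mergeSort (· ≤ ·))

lemma mem_lowL {e : List ℕ} {k : ℕ} :
    k ∈ lowL e ↔ k < e.length ∧ af e k < Cx (af e) k := by
  simp [lowL, af, List.mem_filter, List.mem_range]

lemma lowL_pairwise {e : List ℕ} : (lowL e).Pairwise (· < ·) :=
  (List.pairwise_lt_range (n := e.length)).filter _

lemma lowL_nodup {e : List ℕ} : (lowL e).Nodup :=
  lowL_pairwise.imp (fun h => Nat.ne_of_lt h)

lemma lowL_getElem!_mem {e : List ℕ} {t : ℕ} (ht : t < (lowL e).length) :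
    (lowL e)[t]! ∈ lowL e := mem_getElem! ht

lemma lowL_strictMono {e : List ℕ} {s t : ℕ} (hst : s < t) (ht : t < (lowL e).length) :
    (lowL e)[s]! < (lowL e)[t]! := by
  rw [getElem!_pos (lowL e) s (by omega), getElem!_pos (lowL e) t ht]
  exact List.pairwise_iff_getElem.mp lowL_pairwise s t (by omega) ht hst

lemma lowL_mono {e : List ℕ} {s t : ℕ} (hst : s ≤ t) (ht : t < (lowL e).length) :
    (lowL e)[s]! ≤ (lowL e)[t]! := by
  rcases eq_or_lt_of_le hst with rfl | h
  · exact le_refl _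
  · exact le_of_lt (lowL_strictMono h ht)

lemma lowL_indexOf {e : List ℕ} {k : ℕ} (hk : k ∈ lowL e) :
    (lowL e).idxOf k < (lowL e).length ∧ (lowL e)[(lowL e).idxOf k]! = k := by
  have h1 : (lowL e).idxOf k < (lowL e).length := List.idxOf_lt_length_iff.mpr hk
  exact ⟨h1, by rw [getElem!_pos (lowL e) _ h1]; exact List.getElem_idxOf h1⟩

lemma lowL_indexOf_getElem! {e : List ℕ} {t : ℕ} (ht : t < (lowL e).length) :
    (lowL e).idxOf ((lowL e)[t]!) = t := by
  have hmem := lowL_getElem!_mem ht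
  obtain ⟨h1, h2⟩ := lowL_indexOf hmem
  rw [getElem!_pos (lowL e) _ h1] at h2
  have h3 : (lowL e)[(lowL e).idxOf ((lowL e)[t]!)]'h1 = (lowL e)[t]'ht :=
    h2.trans (getElem!_pos (lowL e) t ht)
  exact (lowL_nodup.getElem_inj_iff).mp h3

lemma VSl_length {e : List ℕ} : (VSl e).length = (lowL e).length := by simp [VSl]

lemma CSl_length {e : List ℕ} : (CSl e).length = (lowL e).length := by simp [CSl]

lemma VSl_getElem! {e : List ℕ} {t : ℕ} (ht : t < (lowL e).length) :
    (VSl e)[t]! = af e ((lowL e)[t]!) := by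
  rw [getElem!_pos (VSl e) t (by simpa [VSl] using ht), getElem!_pos (lowL e) t ht]
  simp [VSl]

lemma CSl_getElem! {e : List ℕ} {t : ℕ} (ht : t < (lowL e).length) :
    (CSl e)[t]! = Cx (af e) ((lowL e)[t]!) := by
  rw [getElem!_pos (CSl e) t (by simpa [CSl] using ht), getElem!_pos (lowL e) t ht]
  simp [CSl]

lemma feas_VSl {e : List ℕ} : Feas (VSl e) (CSl e) := by
  intro t ht
  rw [VSl_length] at ht
  rw [VSl_getElem! ht, CSl_getElem! ht]
  exact (mem_lowL.mp (lowL_getElem!_mem ht)).2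

lemma mono_CSl {e : List ℕ} : MonoCs (CSl e) := by
  intro s t hst ht
  rw [CSl_length] at ht
  rw [CSl_getElem! (by omega), CSl_getElem! ht]
  exact Cx_mono (lowL_mono hst ht)

lemma avoid3210_iff {e : List ℕ} :
    AvoidsPat e [3,2,1,0] ↔
      ∀ s t, s < t → t < (VSl e).length → (VSl e)[s]! ≤ (VSl e)[t]! := by
  rw [AvoidsPat, contains3210_iff]
  constructor
  · intro h s t hst ht
    rw [VSl_length] at ht
    by_contra hcon
    rw [VSl_getElem! (by omega), VSl_getElem! ht] at hcon
    set k := (lowL e)[s]! with hk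
    set l := (lowL e)[t]! with hl
    refine h ⟨k, l, lowL_strictMono hst ht, (mem_lowL.mp (lowL_getElem!_mem ht)).1, by omega,
      (mem_lowL.mp (lowL_getElem!_mem (t := s) (by omega))).2⟩
  · rintro hsor ⟨k, l, hkl, hl, h1, h2⟩
    have hkmem : k ∈ lowL e := mem_lowL.mpr ⟨by omega, h2⟩
    have hlmem : l ∈ lowL e := mem_lowL.mpr ⟨hl, by
      have := Cx_mono (a := af e) (le_of_lt hkl)
      omega⟩
    obtain ⟨hs1, hs2⟩ := lowL_indexOf hkmem
    obtain ⟨ht1, ht2⟩ := lowL_indexOf hlmem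
    set s := (lowL e).idxOf k
    set t := (lowL e).idxOf l
    have hst : s < t := by
      by_contra hcon
      have := lowL_mono (s := t) (t := s) (by omega) hs1
      omega
    have := hsor s t hst (by rwa [VSl_length])
    rw [VSl_getElem! ht1, VSl_getElem! hs1, hs2, ht2] at this
    omega

lemma avoid3201_iff {e : List ℕ} :
    AvoidsPat e [3,2,0,1] ↔ Bcond (VSl e) (CSl e) := by
  rw [AvoidsPat, contains3201_iff]
  constructor
  · rintro h s t hst ht ⟨b1, b2⟩
    rw [VSl_length] at ht
    rw [VSl_getElem! (by omega), VSl_getElem! ht] at b1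
    rw [VSl_getElem! ht, CSl_getElem! (by omega)] at b2
    exact h ⟨(lowL e)[s]!, (lowL e)[t]!, lowL_strictMono hst ht,
      (mem_lowL.mp (lowL_getElem!_mem ht)).1, b1, b2⟩
  · rintro hb ⟨k, l, hkl, hl, h1, h2⟩
    have hkmem : k ∈ lowL e := mem_lowL.mpr ⟨by omega, by omega⟩
    have hlmem : l ∈ lowL e := mem_lowL.mpr ⟨hl, by
      have := Cx_mono (a := af e) (le_of_lt hkl)
      omega⟩
    obtain ⟨hs1, hs2⟩ := lowL_indexOf hkmem
    obtain ⟨ht1, ht2⟩ := lowL_indexOf hlmem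
    set s := (lowL e).idxOf k
    set t := (lowL e).idxOf l
    have hst : s < t := by
      by_contra hcon
      have := lowL_mono (s := t) (t := s) (by omega) hs1
      omega
    refine hb s t hst (by rwa [VSl_length]) ⟨?_, ?_⟩
    · rwa [VSl_getElem! ht1, VSl_getElem! hs1, hs2, ht2]
    · rwa [VSl_getElem! ht1, CSl_getElem! hs1, hs2, ht2]

lemma retoggle_length {e ws : List ℕ} : (retoggle e ws).length = e.length := by
  simp [retoggle]

lemma retoggle_getElem! {e ws : List ℕ} {k : ℕ} (hk : k < e.length) :
    (retoggle e ws)[k]! =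
      if e[k]! < Cx (af e) k then ws[(lowL e).idxOf k]! else e[k]! := by
  rw [getElem!_pos (retoggle e ws) k (by simpa [retoggle] using hk)]
  simp [retoggle]

lemma retoggle_low_val {e ws : List ℕ} {k : ℕ}
    (hws : ∀ t, t < (lowL e).length → ws[t]! < (CSl e)[t]!) (hk : k ∈ lowL e) :
    (retoggle e ws)[k]! = ws[(lowL e).idxOf k]! ∧ (retoggle e ws)[k]! < Cx (af e) k := by
  obtain ⟨hk1, hk2⟩ := mem_lowL.mp hk
  obtain ⟨hi1, hi2⟩ := lowL_indexOf hk
  rw [retoggle_getElem! hk1, if_pos (by simpa [af] using hk2)]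
  have hv := hws _ hi1
  rw [CSl_getElem! hi1, hi2] at hv
  exact ⟨rfl, hv⟩

lemma retoggle_inv {e ws : List ℕ}
    (hws : ∀ t, t < (lowL e).length → ws[t]! < (CSl e)[t]!) :
    ∀ k, k ≤ e.length →
      Mx (af (retoggle e ws)) k = Mx (af e) k ∧ Cx (af (retoggle e ws)) k = Cx (af e) k := by
  apply invariance
  intro k hk
  constructor
  · intro hh
    show (retoggle e ws)[k]! = e[k]!
    rw [retoggle_getElem! hk, if_neg (by simp only [af] at hh; omega)]
  · intro hl
    have := (retoggle_low_val hws (mem_lowL.mpr ⟨hk, hl⟩)).2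
    simpa [af] using this

lemma lowL_retoggle {e ws : List ℕ}
    (hws : ∀ t, t < (lowL e).length → ws[t]! < (CSl e)[t]!) :
    lowL (retoggle e ws) = lowL e := by
  unfold lowL
  rw [retoggle_length]
  refine List.filter_congr (fun k hk => ?_)
  have hkn : k < e.length := List.mem_range.mp hk
  have hC := (retoggle_inv hws k (by omega)).2
  by_cases hl : e[k]! < Cx (af e) k
  · have hval := (retoggle_low_val hws (mem_lowL.mpr ⟨hkn, by simpa [af] using hl⟩)).2
    rw [hC]
    simp only [hl, hval, decide_true]
  · have : (retoggle e ws)[k]! = e[k]! := by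
      rw [retoggle_getElem! hkn, if_neg hl]
    rw [hC, this]

lemma CSl_retoggle {e ws : List ℕ}
    (hws : ∀ t, t < (lowL e).length → ws[t]! < (CSl e)[t]!) :
    CSl (retoggle e ws) = CSl e := by
  unfold CSl
  rw [lowL_retoggle hws]
  refine List.map_congr_left (fun k hk => ?_)
  have hkn : k < e.length := (mem_lowL.mp hk).1
  exact (retoggle_inv hws k (by omega)).2

lemma VSl_retoggle {e ws : List ℕ}
    (hws : ∀ t, t < (lowL e).length → ws[t]! < (CSl e)[t]!)
    (hlen : ws.length = (lowL e).length) :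
    VSl (retoggle e ws) = ws := by
  have hL : lowL (retoggle e ws) = lowL e := lowL_retoggle hws
  refine List.ext_getElem! (by rw [VSl_length, hL, hlen]) (fun t => ?_)
  by_cases ht : t < (lowL e).length
  · rw [VSl_getElem! (by rwa [hL]), hL]
    have hmem := lowL_getElem!_mem (e := e) ht
    have := (retoggle_low_val hws hmem).1
    simp only [af]
    rw [this, lowL_indexOf_getElem! ht]
  · rw [getElem!_neg (VSl (retoggle e ws)) t (by rw [VSl_length, hL]; omega),
      getElem!_neg ws t (by omega)]

lemma retoggle_invSeq {e ws : List ℕ} {n : ℕ}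
    (hws : ∀ t, t < (lowL e).length → ws[t]! < (CSl e)[t]!)
    (he : e ∈ InvSeq n) : retoggle e ws ∈ InvSeq n := by
  obtain ⟨hlen, hbd⟩ := he
  refine ⟨by rw [retoggle_length, hlen], fun i hi => ?_⟩
  have hin : i < e.length := by omega
  by_cases hl : e[i]! < Cx (af e) i
  · have hval := (retoggle_low_val hws (mem_lowL.mpr ⟨hin, by simpa [af] using hl⟩)).2
    have h1 : Cx (af e) i ≤ Mx (af e) i := Cx_le_Mx
    have h2 : Mx (af e) i ≤ i := Mx_le (fun u hu => by
      have := hbd u (by omega)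
      simp only [af]; omega)
    omega
  · rw [retoggle_getElem! hin, if_neg hl]
    exact hbd i hi

lemma toggle_hws {e : List ℕ} :
    ∀ t, t < (lowL e).length → ((VSl e).mergeSort (· ≤ ·))[t]! < (CSl e)[t]! := by
  intro t ht
  have hfs := feas_mergeSort (vs := VSl e) (cs := CSl e)
    (by rw [VSl_length, CSl_length]) mono_CSl feas_VSl
  exact hfs t (by rw [List.length_mergeSort, VSl_length]; exact ht)

lemma mergeSort_VSl_length {e : List ℕ} :
    ((VSl e).mergeSort (· ≤ ·)).length = (lowL e).length := by
  rw [List.length_mergeSort, VSl_length]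

lemma toggle_length {e : List ℕ} : (toggle e).length = e.length := retoggle_length

lemma toggle_invSeq {e : List ℕ} {n : ℕ} (he : e ∈ InvSeq n) : toggle e ∈ InvSeq n :=
  retoggle_invSeq toggle_hws he

lemma VSl_toggle {e : List ℕ} : VSl (toggle e) = (VSl e).mergeSort (· ≤ ·) :=
  VSl_retoggle toggle_hws mergeSort_VSl_length

lemma toggle_avoid3210 {e : List ℕ} : AvoidsPat (toggle e) [3,2,1,0] := by
  rw [avoid3210_iff]
  intro s t hst ht
  rw [VSl_toggle] at ht ⊢
  have hsorted : ((VSl e).mergeSort (· ≤ ·)).Pairwise (· ≤ ·) := by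
    simpa using List.pairwise_mergeSort' (· ≤ ·) (VSl e)
  exact sorted_getElem!_le hsorted (by omega) ht

lemma mem_invAvoid {e : List ℕ} {n : ℕ} {p : List ℕ} :
    e ∈ InvAvoid n p ↔ e ∈ InvSeq n ∧ AvoidsPat e p := Iff.rfl

lemma toggle_injOn {n : ℕ} : Set.InjOn toggle (InvAvoid n [3,2,0,1]) := by
  intro e he e' he' heq
  obtain ⟨⟨hel, heb⟩, hea⟩ := he
  obtain ⟨⟨hel', heb'⟩, hea'⟩ := he'
  have hL : lowL e = lowL e' := by
    have h1 : lowL (toggle e) = lowL e := lowL_retoggle toggle_hws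
    have h2 : lowL (toggle e') = lowL e' := lowL_retoggle toggle_hws
    rw [← h1, ← h2, heq]
  have hCS : CSl e = CSl e' := by
    have h1 : CSl (toggle e) = CSl e := CSl_retoggle toggle_hws
    have h2 : CSl (toggle e') = CSl e' := CSl_retoggle toggle_hws
    rw [← h1, ← h2, heq]
  have hsort : (VSl e).mergeSort (· ≤ ·) = (VSl e').mergeSort (· ≤ ·) := by
    have h1 := VSl_toggle (e := e)
    have h2 := VSl_toggle (e := e')
    rw [← h1, ← h2, heq]
  have hperm : (VSl e).Perm (VSl e') := by
    refine ((List.mergeSort_perm (VSl e) (· ≤ ·)).symm.trans ?_)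
    rw [hsort]
    exact List.mergeSort_perm (VSl e') (· ≤ ·)
  have hVS : VSl e = VSl e' := by
    refine bcond_unique (cs := CSl e) (by rw [VSl_length, CSl_length]) ?_ mono_CSl
      feas_VSl ?_ (avoid3201_iff.mp hea) ?_ hperm
    · rw [hCS, VSl_length, CSl_length]
    · rw [hCS]; exact feas_VSl
    · rw [hCS]; exact avoid3201_iff.mp hea'
  refine List.ext_getElem! (by rw [hel, hel']) (fun k => ?_)
  by_cases hk : k < n
  · by_cases hmem : k ∈ lowL e
    · have hmem' : k ∈ lowL e' := hL ▸ hmem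
      obtain ⟨hi1, hi2⟩ := lowL_indexOf hmem
      obtain ⟨hi1', hi2'⟩ := lowL_indexOf hmem'
      have v1 : (VSl e)[(lowL e).idxOf k]! = af e ((lowL e)[(lowL e).idxOf k]!) :=
        VSl_getElem! hi1
      have v2 : (VSl e')[(lowL e').idxOf k]! = af e' ((lowL e')[(lowL e').idxOf k]!) :=
        VSl_getElem! hi1'
      rw [hi2] at v1
      rw [hi2'] at v2
      have hidx : (lowL e).idxOf k = (lowL e').idxOf k := by rw [hL]
      have : af e k = af e' k := by
        rw [← v1, ← v2, hVS, hidx]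
      simpa [af] using this
    · have hmem' : k ∉ lowL e' := hL ▸ hmem
      have hnl : ¬(e[k]! < Cx (af e) k) := fun hcon =>
        hmem (mem_lowL.mpr ⟨by omega, by simpa [af] using hcon⟩)
      have hnl' : ¬(e'[k]! < Cx (af e') k) := fun hcon =>
        hmem' (mem_lowL.mpr ⟨by omega, by simpa [af] using hcon⟩)
      have t1 : (toggle e)[k]! = e[k]! := by
        rw [toggle, retoggle_getElem! (by omega), if_neg hnl]
      have t2 : (toggle e')[k]! = e'[k]! := by
        rw [toggle, retoggle_getElem! (by omega), if_neg hnl']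
      rw [← t1, ← t2, heq]
  · rw [getElem!_neg e k (by omega), getElem!_neg e' k (by omega)]

lemma toggle_surj {n : ℕ} {f : List ℕ} (hf : f ∈ InvAvoid n [3,2,1,0]) :
    ∃ e ∈ InvAvoid n [3,2,0,1], toggle e = f := by
  obtain ⟨⟨hfl, hfb⟩, hfa⟩ := hf
  have hsorted : (VSl f).Pairwise (· ≤ ·) := by
    rw [List.pairwise_iff_getElem]
    intro i j hi hj hij
    have := avoid3210_iff.mp hfa i j hij hj
    rwa [getElem!_pos (VSl f) i hi, getElem!_pos (VSl f) j hj] at this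
  obtain ⟨ws, hperm, hwlen, hwfeas, hwb⟩ := bcond_exists (cs := CSl f) (vs := VSl f)
    (by rw [VSl_length, CSl_length]) mono_CSl hsorted feas_VSl
  have hwlen' : ws.length = (lowL f).length := by rw [hwlen, CSl_length]
  have hws : ∀ t, t < (lowL f).length → ws[t]! < (CSl f)[t]! := by
    intro t ht
    exact hwfeas t (by omega)
  set e : List ℕ := retoggle f ws with hedef
  have heinv : e ∈ InvSeq n := retoggle_invSeq hws ⟨hfl, hfb⟩
  have hVSe : VSl e = ws := VSl_retoggle hws hwlen'
  have hCSe : CSl e = CSl f := CSl_retoggle hws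
  have hLe : lowL e = lowL f := lowL_retoggle hws
  have heavoid : AvoidsPat e [3,2,0,1] := by
    rw [avoid3201_iff, hVSe, hCSe]
    exact hwb
  refine ⟨e, ⟨heinv, heavoid⟩, ?_⟩
  have hsortws : (ws.mergeSort (· ≤ ·)) = VSl f := by
    refine List.Perm.eq_of_pairwise' ?_ hsorted ((List.mergeSort_perm ws _).trans hperm)
    simpa using List.pairwise_mergeSort' (· ≤ ·) ws
  have htog : toggle e = retoggle e (VSl f) := by
    rw [toggle, hVSe, hsortws]
  rw [htog]
  have helen : e.length = f.length := retoggle_length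
  refine List.ext_getElem! (by rw [retoggle_length, helen]) (fun k => ?_)
  by_cases hk : k < f.length
  · by_cases hmem : k ∈ lowL f
    · have hmem' : k ∈ lowL e := hLe ▸ hmem
      have hcond : e[k]! < Cx (af e) k := by
        have := (mem_lowL.mp hmem').2
        simpa [af] using this
      rw [retoggle_getElem! (by omega), if_pos hcond]
      obtain ⟨hi1, hi2⟩ := lowL_indexOf hmem
      have v1 : (VSl f)[(lowL f).idxOf k]! = af f ((lowL f)[(lowL f).idxOf k]!) :=
        VSl_getElem! hi1
      rw [hi2] at v1
      rw [hLe, v1]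
      simp [af]
    · have hmem' : k ∉ lowL e := hLe ▸ hmem
      have hnl : ¬(e[k]! < Cx (af e) k) := fun hcon =>
        hmem' (mem_lowL.mpr ⟨by omega, by simpa [af] using hcon⟩)
      have hnlf : ¬(f[k]! < Cx (af f) k) := fun hcon =>
        hmem (mem_lowL.mpr ⟨by omega, by simpa [af] using hcon⟩)
      rw [retoggle_getElem! (by omega), if_neg hnl, hedef,
        retoggle_getElem! (by omega), if_neg hnlf]
  · rw [getElem!_neg _ k (by rw [retoggle_length, helen]; omega), getElem!_neg f k (by omega)]

end Stmt16


/-- Theorem: `|I_n(3210)| = |I_n(3201)|` for all `n ≥ 1`. -/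
theorem stmt_16 (n : ℕ) (hn : 1 ≤ n) :
    (InvAvoid n [3, 2, 1, 0]).ncard = (InvAvoid n [3, 2, 0, 1]).ncard := by
  have himg : Stmt16.toggle '' (InvAvoid n [3, 2, 0, 1]) = InvAvoid n [3, 2, 1, 0] := by
    ext f
    constructor
    · rintro ⟨e, he, rfl⟩
      exact ⟨Stmt16.toggle_invSeq he.1, Stmt16.toggle_avoid3210⟩
    · intro hf
      obtain ⟨e, he, heq⟩ := Stmt16.toggle_surj hf
      exact ⟨e, he, heq⟩
  rw [← himg, Set.ncard_image_of_injOn Stmt16.toggle_injOn]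
end
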